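/- Let (Y(1),Y(0),S,X) be a single unit's variables, fix τ, τ′ ∈ (0,1) with f_a(q_a(τ)) > 0 and f_a(q_a(τ′)) > 0 for a = 0,1, and let m̄_a(τ,·,·), m̄_a(τ′,·,·) be working models with E[m̄_a(·,S,X)² | S = s] < ∞ for every s ∈ 𝒮 and both quantile indices. Define δ_a(τ,s,x) = m_a(τ,s,x) − m_a(τ,s), δ̄_a(τ,s,x) = m̄_a(τ,s,x) − m̄_a(τ,s), and u(τ) = √((1−π(S))/π(S)) · (δ₁(τ,S,X) − δ̄₁(τ,S,X))/f₁(q₁(τ)) + √(π(S)/(1−π(S))) · (δ₀(τ,S,X) − δ̄₀(τ,S,X))/f₀(q₀(τ)). Let Σ(τ,τ′) = E[π(S)φ₁(τ,S,Y(1),X)φ₁(τ′,S,Y(1),X)] + E[(1−π(S))φ₀(τ,S,Y(0),X)φ₀(τ′,S,Y(0),X)] + E[φ_S(τ,S)φ_S(τ′,S)], and let Σ*(τ,τ′) = E[(1/π(S)) (τ − 1{Y(1)≤q₁(τ)} − m₁(τ,S,X))(τ′ − 1{Y(1)≤q₁(τ′)} − m₁(τ′,S,X))/(f₁(q₁(τ))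 f₁(q₁(τ′)))] + E[(1/(1−π(S))) (τ − 1{Y(0)≤q₀(τ)} − m₀(τ,S,X))(τ′ − 1{Y(0)≤q₀(τ′)} − m₀(τ′,S,X))/(f₀(q₀(τ)) f₀(q₀(τ′)))] + E[(m₁(τ,S,X)/f₁(q₁(τ)) − m₀(τ,S,X)/f₀(q₀(τ)))(m₁(τ′,S,X)/f₁(q₁(τ′)) − m₀(τ′,S,X)/f₀(q₀(τ′)))]. Then Σ(τ,τ′) − Σ*(τ,τ′) = E[u(τ) u(τ′)]. Consequently, for any finite set of quantile indices τ₁,…,τ_K, the K×K matrix [Σ(τ_k,τ_l)]_{k,l} − [Σ*(τ_k,τ_l)]_{k,l} is positive semidefinite, and it equals the zero matrix whenever the working models are correctly specified at τ₁,…,τ_K, i.e. m̄_a(τ_k,S,X) = m_a(τ_k,S,X) almost surely for a = 0,1 and all k. -/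

import Mathlib

set_option maxHeartbeats 2000000

noncomputable section
open scoped Classical NNReal ENNReal
open MeasureTheory Matrix

/-- `P(S = s)` as a real number. -/
def probS {Ω 𝒮 : Type*} [MeasurableSpace Ω] (μ : Measure Ω) (S : Ω → 𝒮) (s : 𝒮) : ℝ :=
  (μ {ω | S ω = s}).toReal

/-- Conditional mean `E[h | S = s]`. -/
def condMeanS {Ω 𝒮 : Type*} [MeasurableSpace Ω] (μ : Measure Ω) (S : Ω → 𝒮)
    (h : Ω → ℝ) (s : 𝒮) : ℝ :=
  (∫ ω in {ω | S ω = s}, h ω ∂μ) / probS μ S s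

set_option linter.unusedSectionVars false

section Aux

variable {Ω : Type*} [MeasurableSpace Ω] {μ : Measure Ω}
variable {𝒮 : Type*} [Fintype 𝒮] [MeasurableSpace 𝒮] [MeasurableSingletonClass 𝒮]
variable {𝒳 : Type*} [MeasurableSpace 𝒳]

lemma aux_boundS (c : 𝒮 → ℝ) (s : 𝒮) : |c s| ≤ ∑ s' : 𝒮, |c s'| :=
  Finset.single_le_sum (f := fun s' => |c s'|) (fun _ _ => abs_nonneg _) (Finset.mem_univ s)

lemma aux_measS {S : Ω → 𝒮} {X : Ω → 𝒳} (hS : Measurable S) (hX : Measurable X)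
    (g : 𝒮 → 𝒳 → ℝ) (hg : ∀ s, Measurable (g s)) :
    Measurable fun ω => g (S ω) (X ω) := by
  have h : Measurable fun p : 𝒳 × 𝒮 => g p.2 p.1 :=
    measurable_from_prod_countable_left fun s => hg s
  exact h.comp (hX.prodMk hS)

lemma aux_mul_integrable {f g : Ω → ℝ} (hf : MemLp f 2 μ) (hg : MemLp g 2 μ) :
    Integrable (fun ω => f ω * g ω) μ := by
  have h1 := hf.integrable_sq
  have h2 := hg.integrable_sq
  refine Integrable.mono' ((h1.add h2).const_mul (1/2))
    (hf.aestronglyMeasurable.mul hg.aestronglyMeasurable)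
    (Filter.Eventually.of_forall fun ω => ?_)
  have h3 : ‖f ω * g ω‖ = |f ω| * |g ω| := by rw [Real.norm_eq_abs, abs_mul]
  rw [h3]
  simp only [Pi.add_apply]
  nlinarith [sq_nonneg (|f ω| - |g ω|), sq_abs (f ω), sq_abs (g ω)]

lemma aux_memL2_bdd [IsFiniteMeasure μ] {f : Ω → ℝ} (hf : Measurable f) (C : ℝ)
    (hC : ∀ ω, |f ω| ≤ C) : MemLp f 2 μ :=
  MemLp.of_bound hf.aestronglyMeasurable C
    (Filter.Eventually.of_forall fun ω => by simpa [Real.norm_eq_abs] using hC ω)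

lemma aux_int_bdd [IsFiniteMeasure μ] {f : Ω → ℝ} (hf : Measurable f) (C : ℝ)
    (hC : ∀ ω, |f ω| ≤ C) : Integrable f μ :=
  (aux_memL2_bdd hf C hC).integrable one_le_two

lemma aux_int_bdd_mul {f g : Ω → ℝ} (hg : Integrable g μ) (hf : Measurable f)
    {C : ℝ} (hC : ∀ ω, |f ω| ≤ C) : Integrable (fun ω => f ω * g ω) μ :=
  hg.bdd_mul (c := C) hf.aestronglyMeasurable (Filter.Eventually.of_forall fun ω => by simpa [Real.norm_eq_abs] using hC ω)

lemma aux_mulS {S : Ω → 𝒮} (hS : Measurable S) (c : 𝒮 → ℝ) {g : Ω → ℝ}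
    (hg : MemLp g 2 μ) : MemLp (fun ω => c (S ω) * g ω) 2 μ := by
  refine MemLp.of_le_mul (c := ∑ s' : 𝒮, |c s'|) hg
    ((((measurable_of_countable c).comp hS)).aestronglyMeasurable.mul
      hg.aestronglyMeasurable)
    (Filter.Eventually.of_forall fun ω => ?_)
  rw [Real.norm_eq_abs, Real.norm_eq_abs, abs_mul]
  exact mul_le_mul_of_nonneg_right (aux_boundS c (S ω)) (abs_nonneg _)

lemma aux_memL2_cdr2 [IsFiniteMeasure μ] {S : Ω → 𝒮} (hS : Measurable S)
    (c d e : 𝒮 → ℝ) {r1 r2 : Ω → ℝ} (h1 : Measurable r1) (h2 : Measurable r2)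
    (hb1 : ∀ ω, |r1 ω| ≤ 1) (hb2 : ∀ ω, |r2 ω| ≤ 1) :
    MemLp (fun ω => c (S ω) + d (S ω) * r1 ω + e (S ω) * r2 ω) 2 μ := by
  refine aux_memL2_bdd ?_ ((∑ s' : 𝒮, |c s'|) + (∑ s' : 𝒮, |d s'|) + (∑ s' : 𝒮, |e s'|))
    fun ω => ?_
  · exact (((measurable_of_countable c).comp hS).add
      (((measurable_of_countable d).comp hS).mul h1)).add
      (((measurable_of_countable e).comp hS).mul h2)
  · have k1 : |d (S ω) * r1 ω| ≤ ∑ s' : 𝒮, |d s'| := by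
      rw [abs_mul]
      exact le_trans (mul_le_of_le_one_right (abs_nonneg _) (hb1 ω)) (aux_boundS d (S ω))
    have k2 : |e (S ω) * r2 ω| ≤ ∑ s' : 𝒮, |e s'| := by
      rw [abs_mul]
      exact le_trans (mul_le_of_le_one_right (abs_nonneg _) (hb2 ω)) (aux_boundS e (S ω))
    have k3 := aux_boundS c (S ω)
    have k4 := abs_add_le (c (S ω) + d (S ω) * r1 ω) (e (S ω) * r2 ω)
    have k5 := abs_add_le (c (S ω)) (d (S ω) * r1 ω)
    linarith

lemma aux_memL2_combo {S : Ω → 𝒮} (hS : Measurable S) (c d : 𝒮 → ℝ) {b M N : Ω → ℝ}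
    (hb : MemLp b 2 μ) (hM : MemLp M 2 μ) (hN : MemLp N 2 μ) :
    MemLp (fun ω => b ω + c (S ω) * M ω + d (S ω) * N ω) 2 μ :=
  (hb.add (aux_mulS hS c hM)).add (aux_mulS hS d hN)

lemma aux_memL2_master [IsFiniteMeasure μ] {S : Ω → 𝒮} (hS : Measurable S)
    (c0 c1 c2 c3 c4 : 𝒮 → ℝ) {r1 r2 M N : Ω → ℝ}
    (h1 : Measurable r1) (h2 : Measurable r2)
    (hb1 : ∀ ω, |r1 ω| ≤ 1) (hb2 : ∀ ω, |r2 ω| ≤ 1)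
    (hM : MemLp M 2 μ) (hN : MemLp N 2 μ) :
    MemLp (fun ω => c0 (S ω) + c1 (S ω) * r1 ω + c2 (S ω) * r2 ω
      + c3 (S ω) * M ω + c4 (S ω) * N ω) 2 μ :=
  ((aux_memL2_cdr2 hS c0 c1 c2 h1 h2 hb1 hb2).add (aux_mulS hS c3 hM)).add
    (aux_mulS hS c4 hN)

lemma aux_strata {S : Ω → 𝒮} (hS : Measurable S) {f : Ω → ℝ} (hf : Integrable f μ) :
    ∫ ω, f ω ∂μ = ∑ s : 𝒮, ∫ ω in {ω | S ω = s}, f ω ∂μ := by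
  have hms : ∀ s : 𝒮, MeasurableSet {ω | S ω = s} := fun s =>
    hS (measurableSet_singleton s)
  have hsum : ∀ ω, ∑ s : 𝒮, Set.indicator {ω' | S ω' = s} f ω = f ω := by
    intro ω
    rw [Finset.sum_eq_single (S ω)]
    · exact Set.indicator_of_mem (show ω ∈ {ω' | S ω' = S ω} from rfl) f
    · intro b _ hb
      refine Set.indicator_of_notMem ?_ f
      intro hmem
      simp only [Set.mem_setOf_eq] at hmem
      exact hb hmem.symm
    · intro h; exact absurd (Finset.mem_univ _) h
  have h1 : ∫ ω, f ω ∂μ = ∫ ω, ∑ s : 𝒮, Set.indicator {ω' | S ω' = s} f ω ∂μ :=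
    integral_congr_ae (Filter.Eventually.of_forall fun ω => (hsum ω).symm)
  rw [h1, integral_finset_sum _ (fun s _ => hf.indicator (hms s))]
  exact Finset.sum_congr rfl fun s _ => integral_indicator (hms s)

lemma aux_probS_pos [IsFiniteMeasure μ] {S : Ω → 𝒮} {s : 𝒮}
    (hp : 0 < μ {ω | S ω = s}) : 0 < probS μ S s :=
  ENNReal.toReal_pos hp.ne' (measure_ne_top _ _)

lemma aux_setIntegral_ite {Y : Ω → ℝ} (hY : Measurable Y) (t : ℝ) (A : Set Ω) :
    ∫ ω in A, (if Y ω ≤ t then (1:ℝ) else 0) ∂μ = (μ.restrict A {ω | Y ω ≤ t}).toReal := by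
  have hB : MeasurableSet {ω | Y ω ≤ t} := measurableSet_le hY measurable_const
  have h : (fun ω => if Y ω ≤ t then (1:ℝ) else 0) =
      Set.indicator {ω | Y ω ≤ t} (fun _ => (1:ℝ)) := by
    funext ω; simp [Set.indicator_apply, Set.mem_setOf_eq]
  rw [h, integral_indicator hB, setIntegral_const, smul_eq_mul, mul_one, measureReal_def]

lemma aux_condMean_zero [IsFiniteMeasure μ] {S : Ω → 𝒮} (hS : Measurable S)
    (hp : ∀ s : 𝒮, 0 < μ {ω | S ω = s}) {g : Ω → ℝ} (hg : Integrable g μ) (c : 𝒮 → ℝ) :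
    ∫ ω, (condMeanS μ S g (S ω) - g ω) * c (S ω) ∂μ = 0 := by
  have hms : ∀ s : 𝒮, MeasurableSet {ω | S ω = s} := fun s =>
    hS (measurableSet_singleton s)
  have hint : Integrable (fun ω => (condMeanS μ S g (S ω) - g ω) * c (S ω)) μ := by
    have h : (fun ω => (condMeanS μ S g (S ω) - g ω) * c (S ω)) =
        fun ω => condMeanS μ S g (S ω) * c (S ω) - c (S ω) * g ω := by
      funext ω; ring
    rw [h]
    refine Integrable.sub ?_ ?_
    · exact aux_int_bdd
        (show Measurable fun ω => condMeanS μ S g (S ω) * c (S ω) from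
          (measurable_of_countable (fun s => condMeanS μ S g s * c s)).comp hS)
        (∑ s' : 𝒮, |condMeanS μ S g s' * c s'|)
        (fun ω => aux_boundS (fun s => condMeanS μ S g s * c s) (S ω))
    · exact aux_int_bdd_mul hg ((measurable_of_countable c).comp hS)
        (fun ω => aux_boundS c (S ω))
  rw [aux_strata hS hint]
  refine Finset.sum_eq_zero fun s _ => ?_
  have hseq : ∫ ω in {ω | S ω = s}, (condMeanS μ S g (S ω) - g ω) * c (S ω) ∂μ
      = ∫ ω in {ω | S ω = s}, (condMeanS μ S g s - g ω) * c s ∂μ :=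
    setIntegral_congr_ae (hms s) (Filter.Eventually.of_forall fun ω hω => by
      simp only [Set.mem_setOf_eq] at hω; rw [hω])
  rw [hseq, integral_mul_const]
  have hsub : ∫ ω in {ω | S ω = s}, (condMeanS μ S g s - g ω) ∂μ
      = condMeanS μ S g s * probS μ S s - ∫ ω in {ω | S ω = s}, g ω ∂μ := by
    rw [integral_sub (integrable_const _) hg.restrict, setIntegral_const, smul_eq_mul,
      mul_comm]
    rfl
  have hps : probS μ S s ≠ 0 := (aux_probS_pos (hp s)).ne'
  have hcm : condMeanS μ S g s * probS μ S s = ∫ ω in {ω | S ω = s}, g ω ∂μ := by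
    unfold condMeanS; field_simp
  rw [hsub, hcm, sub_self, zero_mul]

lemma aux_orth [IsFiniteMeasure μ] {Y : Ω → ℝ} {S : Ω → 𝒮} {X : Ω → 𝒳}
    (hY : Measurable Y) (hS : Measurable S) (hX : Measurable X)
    (F : 𝒳 → 𝒮 → ℝ → ℝ)
    (hFmeas : ∀ s t, Measurable (fun x => F x s t))
    (hFrng : ∀ x s t, F x s t ∈ Set.Icc (0:ℝ) 1)
    (hF : ∀ (s : 𝒮) (t : ℝ) (B : Set 𝒳), MeasurableSet B →
      (μ ({ω | Y ω ≤ t} ∩ {ω | S ω = s} ∩ (X ⁻¹' B))).toReal =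
        ∫ ω in {ω | S ω = s} ∩ (X ⁻¹' B), F (X ω) s t ∂μ)
    (t : ℝ) (h : 𝒮 → 𝒳 → ℝ) (hh : ∀ s, Measurable (h s))
    (hhi : Integrable (fun ω => h (S ω) (X ω)) μ) :
    ∫ ω, (F (X ω) (S ω) t - (if Y ω ≤ t then (1:ℝ) else 0)) * h (S ω) (X ω) ∂μ = 0 := by
  have hAY : MeasurableSet {ω | Y ω ≤ t} := measurableSet_le hY measurable_const
  have hms : ∀ s : 𝒮, MeasurableSet {ω | S ω = s} := fun s =>
    hS (measurableSet_singleton s)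
  have hFb : ∀ ω, |F (X ω) (S ω) t - (if Y ω ≤ t then (1:ℝ) else 0)| ≤ 1 := by
    intro ω
    obtain ⟨h0, h1⟩ := hFrng (X ω) (S ω) t
    rw [abs_le]; constructor <;> split_ifs <;> linarith
  have hFcm : Measurable fun ω => F (X ω) (S ω) t :=
    aux_measS hS hX (fun s x => F x s t) (fun s => hFmeas s t)
  have hitem : Measurable fun ω => (if Y ω ≤ t then (1:ℝ) else 0) :=
    Measurable.ite hAY measurable_const measurable_const
  have hint : Integrable
      (fun ω => (F (X ω) (S ω) t - (if Y ω ≤ t then (1:ℝ) else 0)) * h (S ω) (X ω)) μ :=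
    aux_int_bdd_mul hhi (hFcm.sub hitem) hFb
  rw [aux_strata hS hint]
  refine Finset.sum_eq_zero fun s _ => ?_
  have hseq : ∫ ω in {ω | S ω = s},
        (F (X ω) (S ω) t - (if Y ω ≤ t then (1:ℝ) else 0)) * h (S ω) (X ω) ∂μ
      = ∫ ω in {ω | S ω = s},
        (F (X ω) s t - (if Y ω ≤ t then (1:ℝ) else 0)) * h s (X ω) ∂μ :=
    setIntegral_congr_ae (hms s) (Filter.Eventually.of_forall fun ω hω => by
      simp only [Set.mem_setOf_eq] at hω; rw [hω])
  rw [hseq]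
  have hrs : Integrable (fun ω => h s (X ω)) (μ.restrict {ω | S ω = s}) := by
    refine (hhi.restrict (s := {ω | S ω = s})).congr ?_
    filter_upwards [ae_restrict_mem (hms s)] with ω hω
    rw [show S ω = s from hω]
  have int1 : Integrable (fun ω => F (X ω) s t * h s (X ω)) (μ.restrict {ω | S ω = s}) :=
    hrs.bdd_mul (c := 1) ((hFmeas s t).comp hX).aestronglyMeasurable
      (Filter.Eventually.of_forall fun ω => by
        rw [Real.norm_eq_abs, abs_le]
        obtain ⟨h0, h1⟩ := hFrng (X ω) s t
        exact ⟨by linarith, h1⟩)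
  have int2 : Integrable (fun ω => (if Y ω ≤ t then (1:ℝ) else 0) * h s (X ω))
      (μ.restrict {ω | S ω = s}) :=
    hrs.bdd_mul (c := 1) hitem.aestronglyMeasurable
      (Filter.Eventually.of_forall fun ω => by rw [Real.norm_eq_abs]; split_ifs <;> simp)
  have hsplit : (fun ω => (F (X ω) s t - (if Y ω ≤ t then (1:ℝ) else 0)) * h s (X ω))
      = fun ω => F (X ω) s t * h s (X ω) - (if Y ω ≤ t then (1:ℝ) else 0) * h s (X ω) := by
    funext ω; ring
  rw [hsplit, integral_sub int1 int2, sub_eq_zero]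
  have hmapkey : Measure.map X (μ.restrict ({ω | Y ω ≤ t} ∩ {ω | S ω = s})) =
      (Measure.map X (μ.restrict {ω | S ω = s})).withDensity
        (fun x => ((F x s t).toNNReal : ℝ≥0∞)) := by
    refine Measure.ext fun B hB => ?_
    rw [Measure.map_apply hX hB, Measure.restrict_apply (hX hB)]
    rw [withDensity_apply _ hB,
      setLIntegral_map hB ((hFmeas s t).real_toNNReal).coe_nnreal_ennreal hX,
      Measure.restrict_restrict (hX hB)]
    have hfin1 : μ (X ⁻¹' B ∩ ({ω | Y ω ≤ t} ∩ {ω | S ω = s})) ≠ ⊤ := measure_ne_top _ _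
    have hle : ∫⁻ ω in X ⁻¹' B ∩ {ω | S ω = s}, ((F (X ω) s t).toNNReal : ℝ≥0∞) ∂μ
        ≤ μ (X ⁻¹' B ∩ {ω | S ω = s}) := by
      calc ∫⁻ ω in X ⁻¹' B ∩ {ω | S ω = s}, ((F (X ω) s t).toNNReal : ℝ≥0∞) ∂μ
          ≤ ∫⁻ _ω in X ⁻¹' B ∩ {ω | S ω = s}, 1 ∂μ := by
            refine lintegral_mono fun ω => ?_
            exact ENNReal.ofReal_le_one.mpr (hFrng (X ω) s t).2
        _ = μ (X ⁻¹' B ∩ {ω | S ω = s}) := setLIntegral_one _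
    have hfin2 : ∫⁻ ω in X ⁻¹' B ∩ {ω | S ω = s}, ((F (X ω) s t).toNNReal : ℝ≥0∞) ∂μ ≠ ⊤ :=
      (lt_of_le_of_lt hle (measure_lt_top _ _)).ne
    rw [← ENNReal.toReal_eq_toReal_iff' hfin1 hfin2]
    have hbo := hF s t B hB
    have hnn : 0 ≤ᵐ[μ.restrict ({ω | S ω = s} ∩ X ⁻¹' B)] fun ω => F (X ω) s t :=
      Filter.Eventually.of_forall fun ω => (hFrng (X ω) s t).1
    have hlin : ∫ ω in {ω | S ω = s} ∩ X ⁻¹' B, F (X ω) s t ∂μ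
        = (∫⁻ ω in {ω | S ω = s} ∩ X ⁻¹' B, ENNReal.ofReal (F (X ω) s t) ∂μ).toReal :=
      integral_eq_lintegral_of_nonneg_ae hnn ((hFmeas s t).comp hX).aestronglyMeasurable
    have hset1 : X ⁻¹' B ∩ ({ω | Y ω ≤ t} ∩ {ω | S ω = s})
        = {ω | Y ω ≤ t} ∩ {ω | S ω = s} ∩ X ⁻¹' B := by
      rw [Set.inter_comm]
    have hset2 : X ⁻¹' B ∩ {ω | S ω = s} = {ω | S ω = s} ∩ X ⁻¹' B := Set.inter_comm _ _
    rw [hset1, hset2, hbo, hlin]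
    rfl
  have e1 : ∫ ω in {ω | S ω = s}, (if Y ω ≤ t then (1:ℝ) else 0) * h s (X ω) ∂μ
      = ∫ ω in {ω | Y ω ≤ t} ∩ {ω | S ω = s}, h s (X ω) ∂μ := by
    have hind : (fun ω => (if Y ω ≤ t then (1:ℝ) else 0) * h s (X ω))
        = Set.indicator {ω | Y ω ≤ t} (fun ω => h s (X ω)) := by
      funext ω
      simp only [Set.indicator_apply, Set.mem_setOf_eq]
      split_ifs <;> simp
    rw [hind, integral_indicator hAY, Measure.restrict_restrict hAY]
  have e2 : ∫ ω in {ω | Y ω ≤ t} ∩ {ω | S ω = s}, h s (X ω) ∂μ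
      = ∫ x, h s x ∂(Measure.map X (μ.restrict ({ω | Y ω ≤ t} ∩ {ω | S ω = s}))) :=
    (integral_map hX.aemeasurable (hh s).aestronglyMeasurable).symm
  have e3 : ∫ x, h s x ∂((Measure.map X (μ.restrict {ω | S ω = s})).withDensity
        (fun x => ((F x s t).toNNReal : ℝ≥0∞)))
      = ∫ x, (F x s t).toNNReal • h s x ∂(Measure.map X (μ.restrict {ω | S ω = s})) :=
    integral_withDensity_eq_integral_smul ((hFmeas s t).real_toNNReal) (h s)
  have e4 : ∫ x, (F x s t).toNNReal • h s x ∂(Measure.map X (μ.restrict {ω | S ω = s}))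
      = ∫ x, F x s t * h s x ∂(Measure.map X (μ.restrict {ω | S ω = s})) := by
    refine integral_congr_ae (Filter.Eventually.of_forall fun x => ?_)
    show (F x s t).toNNReal • h s x = F x s t * h s x
    rw [NNReal.smul_def, Real.coe_toNNReal _ (hFrng x s t).1, smul_eq_mul]
  have e5 : ∫ x, F x s t * h s x ∂(Measure.map X (μ.restrict {ω | S ω = s}))
      = ∫ ω in {ω | S ω = s}, F (X ω) s t * h s (X ω) ∂μ :=
    integral_map hX.aemeasurable ((hFmeas s t).mul (hh s)).aestronglyMeasurable
  rw [e1, e2, hmapkey, e3, e4, e5]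


lemma aux_dzero [IsFiniteMeasure μ] {Y : Ω → ℝ} {S : Ω → 𝒮} {X : Ω → 𝒳}
    (hY : Measurable Y) (hS : Measurable S) (hX : Measurable X)
    (F : 𝒳 → 𝒮 → ℝ → ℝ)
    (hFmeas : ∀ s t, Measurable (fun x => F x s t))
    (hFrng : ∀ x s t, F x s t ∈ Set.Icc (0:ℝ) 1)
    (hF : ∀ (s : 𝒮) (t : ℝ) (B : Set 𝒳), MeasurableSet B →
      (μ ({ω | Y ω ≤ t} ∩ {ω | S ω = s} ∩ (X ⁻¹' B))).toReal =
        ∫ ω in {ω | S ω = s} ∩ (X ⁻¹' B), F (X ω) s t ∂μ)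
    (hp : ∀ s : 𝒮, 0 < μ {ω | S ω = s}) (t : ℝ) (c : 𝒮 → ℝ) :
    ∫ ω, (condMeanS μ S (fun ω' => if Y ω' ≤ t then (1:ℝ) else 0) (S ω)
      - F (X ω) (S ω) t) * c (S ω) ∂μ = 0 := by
  set g : Ω → ℝ := fun ω' => if Y ω' ≤ t then (1:ℝ) else 0 with hgdef
  have hAY : MeasurableSet {ω | Y ω ≤ t} := measurableSet_le hY measurable_const
  have hgm : Measurable g := Measurable.ite hAY measurable_const measurable_const
  have hgb : ∀ ω, |g ω| ≤ 1 := by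
    intro ω; rw [hgdef]; simp only []; split_ifs <;> simp
  have hgi : Integrable g μ := aux_int_bdd hgm 1 hgb
  have h1 : ∫ ω, (condMeanS μ S g (S ω) - g ω) * c (S ω) ∂μ = 0 :=
    aux_condMean_zero hS hp hgi c
  have hci : Integrable (fun ω => (fun (s : 𝒮) (_ : 𝒳) => c s) (S ω) (X ω)) μ :=
    aux_int_bdd ((measurable_of_countable c).comp hS) _ (fun ω => aux_boundS c (S ω))
  have h2 : ∫ ω, (F (X ω) (S ω) t - g ω) * c (S ω) ∂μ = 0 :=
    aux_orth hY hS hX F hFmeas hFrng hF t (fun s _ => c s)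
      (fun _ => measurable_const) hci
  have hcmS : Measurable fun ω => condMeanS μ S g (S ω) :=
    (measurable_of_countable (condMeanS μ S g)).comp hS
  have hcS : Measurable fun ω => c (S ω) := (measurable_of_countable c).comp hS
  have hFcm : Measurable fun ω => F (X ω) (S ω) t :=
    aux_measS hS hX (fun s x => F x s t) (fun s => hFmeas s t)
  have hi1 : Integrable (fun ω => (condMeanS μ S g (S ω) - g ω) * c (S ω)) μ := by
    refine aux_int_bdd ((hcmS.sub hgm).mul hcS)
      (((∑ s' : 𝒮, |condMeanS μ S g s'|) + 1) * (∑ s' : 𝒮, |c s'|)) fun ω => ?_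
    rw [abs_mul]
    have hA : |condMeanS μ S g (S ω) - g ω| ≤ (∑ s' : 𝒮, |condMeanS μ S g s'|) + 1 := by
      have := aux_boundS (condMeanS μ S g) (S ω)
      have := hgb ω
      have habs : |condMeanS μ S g (S ω) - g ω| ≤ |condMeanS μ S g (S ω)| + |g ω| :=
        abs_sub _ _
      linarith
    exact mul_le_mul hA (aux_boundS c (S ω)) (abs_nonneg _)
      (by positivity)
  have hi2 : Integrable (fun ω => (F (X ω) (S ω) t - g ω) * c (S ω)) μ := by
    refine aux_int_bdd ((hFcm.sub hgm).mul hcS) (2 * (∑ s' : 𝒮, |c s'|)) fun ω => ?_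
    rw [abs_mul]
    have hA : |F (X ω) (S ω) t - g ω| ≤ 2 := by
      obtain ⟨ha, hb⟩ := hFrng (X ω) (S ω) t
      have := hgb ω
      rw [abs_le] at *
      constructor <;> [linarith [this.1]; linarith [this.2]]
    exact mul_le_mul hA (aux_boundS c (S ω)) (abs_nonneg _) (by norm_num)
  have hpt : (fun ω => (condMeanS μ S g (S ω) - F (X ω) (S ω) t) * c (S ω)) =
      fun ω => (condMeanS μ S g (S ω) - g ω) * c (S ω)
        - (F (X ω) (S ω) t - g ω) * c (S ω) := funext fun ω => by ring
  rw [hpt, integral_sub hi1 hi2, h1, h2, sub_zero]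

end Aux

theorem adjusted_qte_covariance_decomposition
    {Ω : Type*} [MeasurableSpace Ω] (μ : Measure Ω) [IsProbabilityMeasure μ]
    {𝒮 : Type*} [Fintype 𝒮] [MeasurableSpace 𝒮] [MeasurableSingletonClass 𝒮]
    {𝒳 : Type*} [MeasurableSpace 𝒳]
    (Y1 Y0 : Ω → ℝ) (S : Ω → 𝒮) (X : Ω → 𝒳)
    (hY1m : Measurable Y1) (hY0m : Measurable Y0) (hSm : Measurable S) (hXm : Measurable X)
    (π : 𝒮 → ℝ) (hπ : ∀ s, 0 < π s ∧ π s < 1)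
    (hp : ∀ s, 0 < μ {ω | S ω = s})
    (K : ℕ) (τ : Fin K → ℝ) (hτ : ∀ k, τ k ∈ Set.Ioo (0 : ℝ) 1)
    -- τ-th quantiles of Y(1) and Y(0)
    (q1 q0 : Fin K → ℝ)
    (hq1 : ∀ k, (μ {ω | Y1 ω ≤ q1 k}).toReal = τ k)
    (hq0 : ∀ k, (μ {ω | Y0 ω ≤ q0 k}).toReal = τ k)
    -- Lebesgue densities of Y(1) and Y(0), positive at the quantiles
    (fd1 fd0 : ℝ → ℝ) (hfd1m : Measurable fd1) (hfd0m : Measurable fd0)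
    (hcdf1 : ∀ t, (μ {ω | Y1 ω ≤ t}).toReal = ∫ y in Set.Iic t, fd1 y)
    (hcdf0 : ∀ t, (μ {ω | Y0 ω ≤ t}).toReal = ∫ y in Set.Iic t, fd0 y)
    (hfd1pos : ∀ k, 0 < fd1 (q1 k)) (hfd0pos : ∀ k, 0 < fd0 (q0 k))
    -- conditional CDFs of Y(1), Y(0) given (X, S):  P(Y(a) ≤ t | X = x, S = s)
    (F1 F0 : 𝒳 → 𝒮 → ℝ → ℝ)
    (hF1meas : ∀ s t, Measurable (fun x => F1 x s t))
    (hF0meas : ∀ s t, Measurable (fun x => F0 x s t))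
    (hF1rng : ∀ x s t, F1 x s t ∈ Set.Icc (0 : ℝ) 1)
    (hF0rng : ∀ x s t, F0 x s t ∈ Set.Icc (0 : ℝ) 1)
    (hF1 : ∀ (s : 𝒮) (t : ℝ) (B : Set 𝒳), MeasurableSet B →
      (μ ({ω | Y1 ω ≤ t} ∩ {ω | S ω = s} ∩ (X ⁻¹' B))).toReal =
        ∫ ω in {ω | S ω = s} ∩ (X ⁻¹' B), F1 (X ω) s t ∂μ)
    (hF0 : ∀ (s : 𝒮) (t : ℝ) (B : Set 𝒳), MeasurableSet B →
      (μ ({ω | Y0 ω ≤ t} ∩ {ω | S ω = s} ∩ (X ⁻¹' B))).toReal =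
        ∫ ω in {ω | S ω = s} ∩ (X ⁻¹' B), F0 (X ω) s t ∂μ)
    -- working models, square integrable conditionally on every stratum
    (mbar1 mbar0 : Fin K → 𝒮 → 𝒳 → ℝ)
    (hmbar1m : ∀ k s, Measurable (mbar1 k s)) (hmbar0m : ∀ k s, Measurable (mbar0 k s))
    (hmom1 : ∀ k, Integrable (fun ω => (mbar1 k (S ω) (X ω)) ^ 2) μ)
    (hmom0 : ∀ k, Integrable (fun ω => (mbar0 k (S ω) (X ω)) ^ 2) μ) :
    -- conditional probabilities given S, true specifications, influence functions
    let G1 : Fin K → 𝒮 → ℝ := fun k s =>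
      condMeanS μ S (fun ω => if Y1 ω ≤ q1 k then (1 : ℝ) else 0) s
    let G0 : Fin K → 𝒮 → ℝ := fun k s =>
      condMeanS μ S (fun ω => if Y0 ω ≤ q0 k then (1 : ℝ) else 0) s
    let m1x : Fin K → 𝒮 → 𝒳 → ℝ := fun k s x => τ k - F1 x s (q1 k)
    let m0x : Fin K → 𝒮 → 𝒳 → ℝ := fun k s x => τ k - F0 x s (q0 k)
    let mE1 : Fin K → 𝒮 → ℝ := fun k s => condMeanS μ S (fun ω => mbar1 k s (X ω)) s
    let mE0 : Fin K → 𝒮 → ℝ := fun k s => condMeanS μ S (fun ω => mbar0 k s (X ω)) s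
    let phi1 : Fin K → 𝒮 → ℝ → 𝒳 → ℝ := fun k s y x =>
      ((τ k - (if y ≤ q1 k then (1 : ℝ) else 0) - (τ k - G1 k s)) -
          (1 - π s) * (mbar1 k s x - mE1 k s)) / (π s * fd1 (q1 k)) -
        (mbar0 k s x - mE0 k s) / fd0 (q0 k)
    let phi0 : Fin K → 𝒮 → ℝ → 𝒳 → ℝ := fun k s y x =>
      ((τ k - (if y ≤ q0 k then (1 : ℝ) else 0) - (τ k - G0 k s)) -
          π s * (mbar0 k s x - mE0 k s)) / ((1 - π s) * fd0 (q0 k)) -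
        (mbar1 k s x - mE1 k s) / fd1 (q1 k)
    let phiS : Fin K → 𝒮 → ℝ := fun k s =>
      (τ k - G1 k s) / fd1 (q1 k) - (τ k - G0 k s) / fd0 (q0 k)
    let Sig : Fin K → Fin K → ℝ := fun k l =>
      (∫ ω, π (S ω) * phi1 k (S ω) (Y1 ω) (X ω) * phi1 l (S ω) (Y1 ω) (X ω) ∂μ) +
        (∫ ω, (1 - π (S ω)) * phi0 k (S ω) (Y0 ω) (X ω) * phi0 l (S ω) (Y0 ω) (X ω) ∂μ) +
        (∫ ω, phiS k (S ω) * phiS l (S ω) ∂μ)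
    let SigStar : Fin K → Fin K → ℝ := fun k l =>
      (∫ ω, (π (S ω))⁻¹ *
          ((τ k - (if Y1 ω ≤ q1 k then (1 : ℝ) else 0) - m1x k (S ω) (X ω)) *
            (τ l - (if Y1 ω ≤ q1 l then (1 : ℝ) else 0) - m1x l (S ω) (X ω))) /
          (fd1 (q1 k) * fd1 (q1 l)) ∂μ) +
        (∫ ω, (1 - π (S ω))⁻¹ *
          ((τ k - (if Y0 ω ≤ q0 k then (1 : ℝ) else 0) - m0x k (S ω) (X ω)) *
            (τ l - (if Y0 ω ≤ q0 l then (1 : ℝ) else 0) - m0x l (S ω) (X ω))) /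
          (fd0 (q0 k) * fd0 (q0 l)) ∂μ) +
        (∫ ω, (m1x k (S ω) (X ω) / fd1 (q1 k) - m0x k (S ω) (X ω) / fd0 (q0 k)) *
          (m1x l (S ω) (X ω) / fd1 (q1 l) - m0x l (S ω) (X ω) / fd0 (q0 l)) ∂μ)
    let u : Fin K → Ω → ℝ := fun k ω =>
      Real.sqrt ((1 - π (S ω)) / π (S ω)) *
          (((m1x k (S ω) (X ω) - (τ k - G1 k (S ω))) -
            (mbar1 k (S ω) (X ω) - mE1 k (S ω))) / fd1 (q1 k)) +
        Real.sqrt (π (S ω) / (1 - π (S ω))) *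
          (((m0x k (S ω) (X ω) - (τ k - G0 k (S ω))) -
            (mbar0 k (S ω) (X ω) - mE0 k (S ω))) / fd0 (q0 k))
    (∀ k l : Fin K, Sig k l - SigStar k l = ∫ ω, u k ω * u l ω ∂μ) ∧
      Matrix.PosSemidef (Matrix.of fun k l : Fin K => Sig k l - SigStar k l) ∧
      ((∀ k : Fin K,
          (∀ᵐ ω ∂μ, mbar1 k (S ω) (X ω) = m1x k (S ω) (X ω)) ∧
          (∀ᵐ ω ∂μ, mbar0 k (S ω) (X ω) = m0x k (S ω) (X ω))) →
        (Matrix.of fun k l : Fin K => Sig k l - SigStar k l) = 0) := by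
  
  intro G1 G0 m1x m0x mE1 mE0 phi1 phi0 phiS Sig SigStar u
  have hphi1 : phi1 = fun j s y x =>
      ((τ j - (if y ≤ q1 j then (1 : ℝ) else 0) - (τ j - G1 j s)) -
          (1 - π s) * (mbar1 j s x - mE1 j s)) / (π s * fd1 (q1 j)) -
        (mbar0 j s x - mE0 j s) / fd0 (q0 j) := rfl
  have hphi0 : phi0 = fun j s y x =>
      ((τ j - (if y ≤ q0 j then (1 : ℝ) else 0) - (τ j - G0 j s)) -
          π s * (mbar0 j s x - mE0 j s)) / ((1 - π s) * fd0 (q0 j)) -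
        (mbar1 j s x - mE1 j s) / fd1 (q1 j) := rfl
  have hphiS : phiS = fun j s =>
      (τ j - G1 j s) / fd1 (q1 j) - (τ j - G0 j s) / fd0 (q0 j) := rfl
  have hm1x : m1x = fun j s x => τ j - F1 x s (q1 j) := rfl
  have hm0x : m0x = fun j s x => τ j - F0 x s (q0 j) := rfl
  have hudef : u = fun k ω =>
      Real.sqrt ((1 - π (S ω)) / π (S ω)) *
          (((m1x k (S ω) (X ω) - (τ k - G1 k (S ω))) -
            (mbar1 k (S ω) (X ω) - mE1 k (S ω))) / fd1 (q1 k)) +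
        Real.sqrt (π (S ω) / (1 - π (S ω))) *
          (((m0x k (S ω) (X ω) - (τ k - G0 k (S ω))) -
            (mbar0 k (S ω) (X ω) - mE0 k (S ω))) / fd0 (q0 k)) := rfl
  have hπ0 : ∀ s, π s ≠ 0 := fun s => (hπ s).1.ne'
  have h1π0 : ∀ s, (1 : ℝ) - π s ≠ 0 := fun s => by have := (hπ s).2; intro h; linarith
  have hf1ne : ∀ j, fd1 (q1 j) ≠ 0 := fun j => (hfd1pos j).ne'
  have hf0ne : ∀ j, fd0 (q0 j) ≠ 0 := fun j => (hfd0pos j).ne'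
  have hF1cm : ∀ j : Fin K, Measurable fun ω => F1 (X ω) (S ω) (q1 j) := fun j =>
    aux_measS hSm hXm (fun s x => F1 x s (q1 j)) (fun s => hF1meas s (q1 j))
  have hF0cm : ∀ j : Fin K, Measurable fun ω => F0 (X ω) (S ω) (q0 j) := fun j =>
    aux_measS hSm hXm (fun s x => F0 x s (q0 j)) (fun s => hF0meas s (q0 j))
  have hi1m : ∀ j : Fin K, Measurable fun ω => (if Y1 ω ≤ q1 j then (1:ℝ) else 0) :=
    fun j => Measurable.ite (measurableSet_le hY1m measurable_const)
      measurable_const measurable_const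
  have hi0m : ∀ j : Fin K, Measurable fun ω => (if Y0 ω ≤ q0 j then (1:ℝ) else 0) :=
    fun j => Measurable.ite (measurableSet_le hY0m measurable_const)
      measurable_const measurable_const
  have hF1cb : ∀ (j : Fin K) ω, |F1 (X ω) (S ω) (q1 j)| ≤ 1 := fun j ω => by
    obtain ⟨h0, h1⟩ := hF1rng (X ω) (S ω) (q1 j)
    rw [abs_le]; exact ⟨by linarith, h1⟩
  have hF0cb : ∀ (j : Fin K) ω, |F0 (X ω) (S ω) (q0 j)| ≤ 1 := fun j ω => by
    obtain ⟨h0, h1⟩ := hF0rng (X ω) (S ω) (q0 j)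
    rw [abs_le]; exact ⟨by linarith, h1⟩
  have hi1b : ∀ (j : Fin K) ω, |(if Y1 ω ≤ q1 j then (1:ℝ) else 0)| ≤ 1 := fun j ω => by
    split_ifs <;> simp
  have hi0b : ∀ (j : Fin K) ω, |(if Y0 ω ≤ q0 j then (1:ℝ) else 0)| ≤ 1 := fun j ω => by
    split_ifs <;> simp
  have hM1L2 : ∀ j : Fin K, MemLp (fun ω => mbar1 j (S ω) (X ω)) 2 μ := fun j =>
    (memLp_two_iff_integrable_sq
      (aux_measS hSm hXm (mbar1 j) (hmbar1m j)).aestronglyMeasurable).mpr (hmom1 j)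
  have hM0L2 : ∀ j : Fin K, MemLp (fun ω => mbar0 j (S ω) (X ω)) 2 μ := fun j =>
    (memLp_two_iff_integrable_sq
      (aux_measS hSm hXm (mbar0 j) (hmbar0m j)).aestronglyMeasurable).mpr (hmom0 j)
  set e1 : Fin K → Ω → ℝ := fun j ω =>
    F1 (X ω) (S ω) (q1 j) - (if Y1 ω ≤ q1 j then (1:ℝ) else 0) with he1
  set e0 : Fin K → Ω → ℝ := fun j ω =>
    F0 (X ω) (S ω) (q0 j) - (if Y0 ω ≤ q0 j then (1:ℝ) else 0) with he0
  set B1 : Fin K → Ω → ℝ := fun j ω =>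
    ((G1 j (S ω) - F1 (X ω) (S ω) (q1 j)) -
      (1 - π (S ω)) * (mbar1 j (S ω) (X ω) - mE1 j (S ω))) / (π (S ω) * fd1 (q1 j)) -
      (mbar0 j (S ω) (X ω) - mE0 j (S ω)) / fd0 (q0 j) with hB1
  set B0 : Fin K → Ω → ℝ := fun j ω =>
    ((G0 j (S ω) - F0 (X ω) (S ω) (q0 j)) -
      π (S ω) * (mbar0 j (S ω) (X ω) - mE0 j (S ω))) / ((1 - π (S ω)) * fd0 (q0 j)) -
      (mbar1 j (S ω) (X ω) - mE1 j (S ω)) / fd1 (q1 j) with hB0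
  set D : Fin K → Ω → ℝ := fun j ω =>
    (G1 j (S ω) - F1 (X ω) (S ω) (q1 j)) / fd1 (q1 j) -
      (G0 j (S ω) - F0 (X ω) (S ω) (q0 j)) / fd0 (q0 j) with hD
  have hE1L2 : ∀ j : Fin K, MemLp (e1 j) 2 μ := by
    intro j
    have heq : (e1 j) = fun ω => (fun _ : 𝒮 => (0:ℝ)) (S ω)
        + (fun _ : 𝒮 => (1:ℝ)) (S ω) * F1 (X ω) (S ω) (q1 j)
        + (fun _ : 𝒮 => (-1:ℝ)) (S ω) * (if Y1 ω ≤ q1 j then (1:ℝ) else 0)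
        + (fun _ : 𝒮 => (0:ℝ)) (S ω) * mbar1 j (S ω) (X ω)
        + (fun _ : 𝒮 => (0:ℝ)) (S ω) * mbar0 j (S ω) (X ω) := by
      funext ω; simp only [he1]; ring
    rw [heq]
    exact aux_memL2_master hSm (fun _ : 𝒮 => (0:ℝ)) (fun _ : 𝒮 => (1:ℝ)) (fun _ : 𝒮 => (-1:ℝ)) (fun _ : 𝒮 => (0:ℝ)) (fun _ : 𝒮 => (0:ℝ)) (hF1cm j) (hi1m j) (hF1cb j) (hi1b j)
      (hM1L2 j) (hM0L2 j)
  have hE0L2 : ∀ j : Fin K, MemLp (e0 j) 2 μ := by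
    intro j
    have heq : (e0 j) = fun ω => (fun _ : 𝒮 => (0:ℝ)) (S ω)
        + (fun _ : 𝒮 => (1:ℝ)) (S ω) * F0 (X ω) (S ω) (q0 j)
        + (fun _ : 𝒮 => (-1:ℝ)) (S ω) * (if Y0 ω ≤ q0 j then (1:ℝ) else 0)
        + (fun _ : 𝒮 => (0:ℝ)) (S ω) * mbar1 j (S ω) (X ω)
        + (fun _ : 𝒮 => (0:ℝ)) (S ω) * mbar0 j (S ω) (X ω) := by
      funext ω; simp only [he0]; ring
    rw [heq]
    exact aux_memL2_master hSm (fun _ : 𝒮 => (0:ℝ)) (fun _ : 𝒮 => (1:ℝ)) (fun _ : 𝒮 => (-1:ℝ)) (fun _ : 𝒮 => (0:ℝ)) (fun _ : 𝒮 => (0:ℝ)) (hF0cm j) (hi0m j) (hF0cb j) (hi0b j)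
      (hM1L2 j) (hM0L2 j)
  have hB1L2 : ∀ j : Fin K, MemLp (B1 j) 2 μ := by
    intro j
    have heq : (B1 j) = fun ω => (fun s => (G1 j s + (1 - π s) * mE1 j s) / (π s * fd1 (q1 j)) + mE0 j s / fd0 (q0 j)) (S ω)
        + (fun s => -(1 / (π s * fd1 (q1 j)))) (S ω) * F1 (X ω) (S ω) (q1 j)
        + (fun _ : 𝒮 => (0:ℝ)) (S ω) * (if Y1 ω ≤ q1 j then (1:ℝ) else 0)
        + (fun s => -((1 - π s) / (π s * fd1 (q1 j)))) (S ω) * mbar1 j (S ω) (X ω)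
        + (fun _ : 𝒮 => -(1 / fd0 (q0 j))) (S ω) * mbar0 j (S ω) (X ω) := by
      funext ω; simp only [hB1]; ring
    rw [heq]
    exact aux_memL2_master hSm (fun s => (G1 j s + (1 - π s) * mE1 j s) / (π s * fd1 (q1 j)) + mE0 j s / fd0 (q0 j)) (fun s => -(1 / (π s * fd1 (q1 j)))) (fun _ : 𝒮 => (0:ℝ)) (fun s => -((1 - π s) / (π s * fd1 (q1 j)))) (fun _ : 𝒮 => -(1 / fd0 (q0 j))) (hF1cm j) (hi1m j) (hF1cb j) (hi1b j)
      (hM1L2 j) (hM0L2 j)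
  have hB0L2 : ∀ j : Fin K, MemLp (B0 j) 2 μ := by
    intro j
    have heq : (B0 j) = fun ω => (fun s => (G0 j s + π s * mE0 j s) / ((1 - π s) * fd0 (q0 j)) + mE1 j s / fd1 (q1 j)) (S ω)
        + (fun s => -(1 / ((1 - π s) * fd0 (q0 j)))) (S ω) * F0 (X ω) (S ω) (q0 j)
        + (fun _ : 𝒮 => (0:ℝ)) (S ω) * (if Y0 ω ≤ q0 j then (1:ℝ) else 0)
        + (fun _ : 𝒮 => -(1 / fd1 (q1 j))) (S ω) * mbar1 j (S ω) (X ω)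
        + (fun s => -(π s / ((1 - π s) * fd0 (q0 j)))) (S ω) * mbar0 j (S ω) (X ω) := by
      funext ω; simp only [hB0]; ring
    rw [heq]
    exact aux_memL2_master hSm (fun s => (G0 j s + π s * mE0 j s) / ((1 - π s) * fd0 (q0 j)) + mE1 j s / fd1 (q1 j)) (fun s => -(1 / ((1 - π s) * fd0 (q0 j)))) (fun _ : 𝒮 => (0:ℝ)) (fun _ : 𝒮 => -(1 / fd1 (q1 j))) (fun s => -(π s / ((1 - π s) * fd0 (q0 j)))) (hF0cm j) (hi0m j) (hF0cb j) (hi0b j)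
      (hM1L2 j) (hM0L2 j)
  have hDL2 : ∀ j : Fin K, MemLp (D j) 2 μ := by
    intro j
    have heq : (D j) = fun ω => (fun s => G1 j s / fd1 (q1 j) - G0 j s / fd0 (q0 j)) (S ω)
        + (fun _ : 𝒮 => -(1 / fd1 (q1 j))) (S ω) * F1 (X ω) (S ω) (q1 j)
        + (fun _ : 𝒮 => 1 / fd0 (q0 j)) (S ω) * F0 (X ω) (S ω) (q0 j)
        + (fun _ : 𝒮 => (0:ℝ)) (S ω) * mbar1 j (S ω) (X ω)
        + (fun _ : 𝒮 => (0:ℝ)) (S ω) * mbar0 j (S ω) (X ω) := by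
      funext ω; simp only [hD]; ring
    rw [heq]
    exact aux_memL2_master hSm (fun s => G1 j s / fd1 (q1 j) - G0 j s / fd0 (q0 j)) (fun _ : 𝒮 => -(1 / fd1 (q1 j))) (fun _ : 𝒮 => 1 / fd0 (q0 j)) (fun _ : 𝒮 => (0:ℝ)) (fun _ : 𝒮 => (0:ℝ)) (hF1cm j) (hF0cm j) (hF1cb j) (hF0cb j)
      (hM1L2 j) (hM0L2 j)
  have hP1L2 : ∀ j : Fin K, MemLp (fun ω => phi1 j (S ω) (Y1 ω) (X ω)) 2 μ := by
    intro j
    have heq : (fun ω => phi1 j (S ω) (Y1 ω) (X ω)) = fun ω => (fun s => (G1 j s + (1 - π s) * mE1 j s) / (π s * fd1 (q1 j)) + mE0 j s / fd0 (q0 j)) (S ω)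
        + (fun s => -(1 / (π s * fd1 (q1 j)))) (S ω) * (if Y1 ω ≤ q1 j then (1:ℝ) else 0)
        + (fun _ : 𝒮 => (0:ℝ)) (S ω) * F1 (X ω) (S ω) (q1 j)
        + (fun s => -((1 - π s) / (π s * fd1 (q1 j)))) (S ω) * mbar1 j (S ω) (X ω)
        + (fun _ : 𝒮 => -(1 / fd0 (q0 j))) (S ω) * mbar0 j (S ω) (X ω) := by
      funext ω; simp only [hphi1]; ring
    rw [heq]
    exact aux_memL2_master hSm (fun s => (G1 j s + (1 - π s) * mE1 j s) / (π s * fd1 (q1 j)) + mE0 j s / fd0 (q0 j)) (fun s => -(1 / (π s * fd1 (q1 j)))) (fun _ : 𝒮 => (0:ℝ)) (fun s => -((1 - π s) / (π s * fd1 (q1 j)))) (fun _ : 𝒮 => -(1 / fd0 (q0 j))) (hi1m j) (hF1cm j) (hi1b j) (hF1cb j)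
      (hM1L2 j) (hM0L2 j)
  have hP0L2 : ∀ j : Fin K, MemLp (fun ω => phi0 j (S ω) (Y0 ω) (X ω)) 2 μ := by
    intro j
    have heq : (fun ω => phi0 j (S ω) (Y0 ω) (X ω)) = fun ω => (fun s => (G0 j s + π s * mE0 j s) / ((1 - π s) * fd0 (q0 j)) + mE1 j s / fd1 (q1 j)) (S ω)
        + (fun s => -(1 / ((1 - π s) * fd0 (q0 j)))) (S ω) * (if Y0 ω ≤ q0 j then (1:ℝ) else 0)
        + (fun _ : 𝒮 => (0:ℝ)) (S ω) * F0 (X ω) (S ω) (q0 j)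
        + (fun _ : 𝒮 => -(1 / fd1 (q1 j))) (S ω) * mbar1 j (S ω) (X ω)
        + (fun s => -(π s / ((1 - π s) * fd0 (q0 j)))) (S ω) * mbar0 j (S ω) (X ω) := by
      funext ω; simp only [hphi0]; ring
    rw [heq]
    exact aux_memL2_master hSm (fun s => (G0 j s + π s * mE0 j s) / ((1 - π s) * fd0 (q0 j)) + mE1 j s / fd1 (q1 j)) (fun s => -(1 / ((1 - π s) * fd0 (q0 j)))) (fun _ : 𝒮 => (0:ℝ)) (fun _ : 𝒮 => -(1 / fd1 (q1 j))) (fun s => -(π s / ((1 - π s) * fd0 (q0 j)))) (hi0m j) (hF0cm j) (hi0b j) (hF0cb j)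
      (hM1L2 j) (hM0L2 j)
  have hPSL2 : ∀ j : Fin K, MemLp (fun ω => phiS j (S ω)) 2 μ := by
    intro j
    have heq : (fun ω => phiS j (S ω)) = fun ω => (fun s => phiS j s) (S ω)
        + (fun _ : 𝒮 => (0:ℝ)) (S ω) * F1 (X ω) (S ω) (q1 j)
        + (fun _ : 𝒮 => (0:ℝ)) (S ω) * F0 (X ω) (S ω) (q0 j)
        + (fun _ : 𝒮 => (0:ℝ)) (S ω) * mbar1 j (S ω) (X ω)
        + (fun _ : 𝒮 => (0:ℝ)) (S ω) * mbar0 j (S ω) (X ω) := by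
      funext ω; simp only [hphiS]; ring
    rw [heq]
    exact aux_memL2_master hSm (fun s => phiS j s) (fun _ : 𝒮 => (0:ℝ)) (fun _ : 𝒮 => (0:ℝ)) (fun _ : 𝒮 => (0:ℝ)) (fun _ : 𝒮 => (0:ℝ)) (hF1cm j) (hF0cm j) (hF1cb j) (hF0cb j)
      (hM1L2 j) (hM0L2 j)
  have hCL2 : ∀ j : Fin K, MemLp (fun ω => m1x j (S ω) (X ω) / fd1 (q1 j) - m0x j (S ω) (X ω) / fd0 (q0 j)) 2 μ := by
    intro j
    have heq : (fun ω => m1x j (S ω) (X ω) / fd1 (q1 j) - m0x j (S ω) (X ω) / fd0 (q0 j)) = fun ω => (fun _ : 𝒮 => τ j / fd1 (q1 j) - τ j / fd0 (q0 j)) (S ω)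
        + (fun _ : 𝒮 => -(1 / fd1 (q1 j))) (S ω) * F1 (X ω) (S ω) (q1 j)
        + (fun _ : 𝒮 => 1 / fd0 (q0 j)) (S ω) * F0 (X ω) (S ω) (q0 j)
        + (fun _ : 𝒮 => (0:ℝ)) (S ω) * mbar1 j (S ω) (X ω)
        + (fun _ : 𝒮 => (0:ℝ)) (S ω) * mbar0 j (S ω) (X ω) := by
      funext ω; simp only [hm1x, hm0x]; ring
    rw [heq]
    exact aux_memL2_master hSm (fun _ : 𝒮 => τ j / fd1 (q1 j) - τ j / fd0 (q0 j)) (fun _ : 𝒮 => -(1 / fd1 (q1 j))) (fun _ : 𝒮 => 1 / fd0 (q0 j)) (fun _ : 𝒮 => (0:ℝ)) (fun _ : 𝒮 => (0:ℝ)) (hF1cm j) (hF0cm j) (hF1cb j) (hF0cb j)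
      (hM1L2 j) (hM0L2 j)
  have hUL2 : ∀ j : Fin K, MemLp (u j) 2 μ := by
    intro j
    have heq : (u j) = fun ω => (fun s => Real.sqrt ((1 - π s) / π s) * ((G1 j s + mE1 j s) / fd1 (q1 j)) + Real.sqrt (π s / (1 - π s)) * ((G0 j s + mE0 j s) / fd0 (q0 j))) (S ω)
        + (fun s => -(Real.sqrt ((1 - π s) / π s) / fd1 (q1 j))) (S ω) * F1 (X ω) (S ω) (q1 j)
        + (fun s => -(Real.sqrt (π s / (1 - π s)) / fd0 (q0 j))) (S ω) * F0 (X ω) (S ω) (q0 j)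
        + (fun s => -(Real.sqrt ((1 - π s) / π s) / fd1 (q1 j))) (S ω) * mbar1 j (S ω) (X ω)
        + (fun s => -(Real.sqrt (π s / (1 - π s)) / fd0 (q0 j))) (S ω) * mbar0 j (S ω) (X ω) := by
      funext ω; simp only [hudef, hm1x, hm0x]; ring
    rw [heq]
    exact aux_memL2_master hSm (fun s => Real.sqrt ((1 - π s) / π s) * ((G1 j s + mE1 j s) / fd1 (q1 j)) + Real.sqrt (π s / (1 - π s)) * ((G0 j s + mE0 j s) / fd0 (q0 j))) (fun s => -(Real.sqrt ((1 - π s) / π s) / fd1 (q1 j))) (fun s => -(Real.sqrt (π s / (1 - π s)) / fd0 (q0 j))) (fun s => -(Real.sqrt ((1 - π s) / π s) / fd1 (q1 j))) (fun s => -(Real.sqrt (π s / (1 - π s)) / fd0 (q0 j))) (hF1cm j) (hF0cm j) (hF1cb j) (hF0cb j)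
      (hM1L2 j) (hM0L2 j)

  -- ===== the key covariance decomposition =====
  have key : ∀ k l : Fin K, Sig k l - SigStar k l = ∫ ω, u k ω * u l ω ∂μ := by
    intro k l
    have hI1 : Integrable (fun ω => π (S ω) * phi1 k (S ω) (Y1 ω) (X ω) *
        phi1 l (S ω) (Y1 ω) (X ω)) μ :=
      aux_mul_integrable (aux_mulS hSm π (hP1L2 k)) (hP1L2 l)
    have hI2 : Integrable (fun ω => (1 - π (S ω)) * phi0 k (S ω) (Y0 ω) (X ω) *
        phi0 l (S ω) (Y0 ω) (X ω)) μ :=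
      aux_mul_integrable (aux_mulS hSm (fun s => 1 - π s) (hP0L2 k)) (hP0L2 l)
    have hI3 : Integrable (fun ω => phiS k (S ω) * phiS l (S ω)) μ :=
      aux_mul_integrable (hPSL2 k) (hPSL2 l)
    have hI4 : Integrable (fun ω => (π (S ω))⁻¹ *
        ((τ k - (if Y1 ω ≤ q1 k then (1 : ℝ) else 0) - m1x k (S ω) (X ω)) *
          (τ l - (if Y1 ω ≤ q1 l then (1 : ℝ) else 0) - m1x l (S ω) (X ω))) /
        (fd1 (q1 k) * fd1 (q1 l))) μ := by
      have heq : (fun ω => (π (S ω))⁻¹ *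
          ((τ k - (if Y1 ω ≤ q1 k then (1 : ℝ) else 0) - m1x k (S ω) (X ω)) *
            (τ l - (if Y1 ω ≤ q1 l then (1 : ℝ) else 0) - m1x l (S ω) (X ω))) /
          (fd1 (q1 k) * fd1 (q1 l)))
          = fun ω => ((fun s => (π s)⁻¹ / (fd1 (q1 k) * fd1 (q1 l))) (S ω) * e1 k ω) * e1 l ω := by
        funext ω; simp only [hm1x, he1]; ring
      rw [heq]
      exact aux_mul_integrable
        (aux_mulS hSm (fun s => (π s)⁻¹ / (fd1 (q1 k) * fd1 (q1 l))) (hE1L2 k)) (hE1L2 l)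
    have hI5 : Integrable (fun ω => (1 - π (S ω))⁻¹ *
        ((τ k - (if Y0 ω ≤ q0 k then (1 : ℝ) else 0) - m0x k (S ω) (X ω)) *
          (τ l - (if Y0 ω ≤ q0 l then (1 : ℝ) else 0) - m0x l (S ω) (X ω))) /
        (fd0 (q0 k) * fd0 (q0 l))) μ := by
      have heq : (fun ω => (1 - π (S ω))⁻¹ *
          ((τ k - (if Y0 ω ≤ q0 k then (1 : ℝ) else 0) - m0x k (S ω) (X ω)) *
            (τ l - (if Y0 ω ≤ q0 l then (1 : ℝ) else 0) - m0x l (S ω) (X ω))) /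
          (fd0 (q0 k) * fd0 (q0 l)))
          = fun ω => ((fun s => (1 - π s)⁻¹ / (fd0 (q0 k) * fd0 (q0 l))) (S ω) * e0 k ω) * e0 l ω := by
        funext ω; simp only [hm0x, he0]; ring
      rw [heq]
      exact aux_mul_integrable
        (aux_mulS hSm (fun s => (1 - π s)⁻¹ / (fd0 (q0 k) * fd0 (q0 l))) (hE0L2 k)) (hE0L2 l)
    have hI6 : Integrable (fun ω =>
        (m1x k (S ω) (X ω) / fd1 (q1 k) - m0x k (S ω) (X ω) / fd0 (q0 k)) *
        (m1x l (S ω) (X ω) / fd1 (q1 l) - m0x l (S ω) (X ω) / fd0 (q0 l))) μ :=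
      aux_mul_integrable (hCL2 k) (hCL2 l)
    -- integrability of the correction terms, arm 1
    have hT1int : Integrable (fun ω => e1 k ω * (B1 l ω / fd1 (q1 k))) μ := by
      refine aux_mul_integrable (hE1L2 k) ?_
      have heq : (fun ω => B1 l ω / fd1 (q1 k)) = fun ω => (fd1 (q1 k))⁻¹ * B1 l ω := by
        funext ω; ring
      rw [heq]; exact (hB1L2 l).const_mul _
    have hT2int : Integrable (fun ω => e1 l ω * (B1 k ω / fd1 (q1 l))) μ := by
      refine aux_mul_integrable (hE1L2 l) ?_
      have heq : (fun ω => B1 k ω / fd1 (q1 l)) = fun ω => (fd1 (q1 l))⁻¹ * B1 k ω := by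
        funext ω; ring
      rw [heq]; exact (hB1L2 k).const_mul _
    have hPB1int : Integrable (fun ω => π (S ω) * B1 k ω * B1 l ω) μ :=
      aux_mul_integrable (aux_mulS hSm π (hB1L2 k)) (hB1L2 l)
    have hT1zero : ∫ ω, e1 k ω * (B1 l ω / fd1 (q1 k)) ∂μ = 0 := by
      have hh : ∀ s : 𝒮, Measurable (fun x =>
          (((G1 l s - F1 x s (q1 l)) - (1 - π s) * (mbar1 l s x - mE1 l s)) /
            (π s * fd1 (q1 l)) - (mbar0 l s x - mE0 l s) / fd0 (q0 l)) / fd1 (q1 k)) := by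
        intro s
        exact ((((measurable_const.sub (hF1meas s (q1 l))).sub
          (((hmbar1m l s).sub measurable_const).const_mul ((1:ℝ) - π s))).div_const _).sub
          (((hmbar0m l s).sub measurable_const).div_const _)).div_const _
      have hhi : Integrable (fun ω => (fun (s : 𝒮) (x : 𝒳) =>
          (((G1 l s - F1 x s (q1 l)) - (1 - π s) * (mbar1 l s x - mE1 l s)) /
            (π s * fd1 (q1 l)) - (mbar0 l s x - mE0 l s) / fd0 (q0 l)) / fd1 (q1 k))
          (S ω) (X ω)) μ := by
        have hgi : Integrable (fun ω => (fd1 (q1 k))⁻¹ * B1 l ω) μ :=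
          ((hB1L2 l).const_mul _).integrable one_le_two
        refine hgi.congr (Filter.Eventually.of_forall fun ω => ?_)
        simp only [hB1]; ring
      exact aux_orth hY1m hSm hXm F1 hF1meas hF1rng hF1 (q1 k)
        (fun (s : 𝒮) (x : 𝒳) =>
          (((G1 l s - F1 x s (q1 l)) - (1 - π s) * (mbar1 l s x - mE1 l s)) /
            (π s * fd1 (q1 l)) - (mbar0 l s x - mE0 l s) / fd0 (q0 l)) / fd1 (q1 k)) hh hhi
    have hT2zero : ∫ ω, e1 l ω * (B1 k ω / fd1 (q1 l)) ∂μ = 0 := by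
      have hh : ∀ s : 𝒮, Measurable (fun x =>
          (((G1 k s - F1 x s (q1 k)) - (1 - π s) * (mbar1 k s x - mE1 k s)) /
            (π s * fd1 (q1 k)) - (mbar0 k s x - mE0 k s) / fd0 (q0 k)) / fd1 (q1 l)) := by
        intro s
        exact ((((measurable_const.sub (hF1meas s (q1 k))).sub
          (((hmbar1m k s).sub measurable_const).const_mul ((1:ℝ) - π s))).div_const _).sub
          (((hmbar0m k s).sub measurable_const).div_const _)).div_const _
      have hhi : Integrable (fun ω => (fun (s : 𝒮) (x : 𝒳) =>
          (((G1 k s - F1 x s (q1 k)) - (1 - π s) * (mbar1 k s x - mE1 k s)) /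
            (π s * fd1 (q1 k)) - (mbar0 k s x - mE0 k s) / fd0 (q0 k)) / fd1 (q1 l))
          (S ω) (X ω)) μ := by
        have hgi : Integrable (fun ω => (fd1 (q1 l))⁻¹ * B1 k ω) μ :=
          ((hB1L2 k).const_mul _).integrable one_le_two
        refine hgi.congr (Filter.Eventually.of_forall fun ω => ?_)
        simp only [hB1]; ring
      exact aux_orth hY1m hSm hXm F1 hF1meas hF1rng hF1 (q1 l)
        (fun (s : 𝒮) (x : 𝒳) =>
          (((G1 k s - F1 x s (q1 k)) - (1 - π s) * (mbar1 k s x - mE1 k s)) /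
            (π s * fd1 (q1 k)) - (mbar0 k s x - mE0 k s) / fd0 (q0 k)) / fd1 (q1 l)) hh hhi
    have step1 : (∫ ω, π (S ω) * phi1 k (S ω) (Y1 ω) (X ω) * phi1 l (S ω) (Y1 ω) (X ω) ∂μ)
        - (∫ ω, (π (S ω))⁻¹ *
          ((τ k - (if Y1 ω ≤ q1 k then (1 : ℝ) else 0) - m1x k (S ω) (X ω)) *
            (τ l - (if Y1 ω ≤ q1 l then (1 : ℝ) else 0) - m1x l (S ω) (X ω))) /
          (fd1 (q1 k) * fd1 (q1 l)) ∂μ)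
        = ∫ ω, π (S ω) * B1 k ω * B1 l ω ∂μ := by
      have h0 : ∫ ω, (e1 k ω * (B1 l ω / fd1 (q1 k)) + e1 l ω * (B1 k ω / fd1 (q1 l))
            + π (S ω) * B1 k ω * B1 l ω
            + (π (S ω))⁻¹ *
              ((τ k - (if Y1 ω ≤ q1 k then (1 : ℝ) else 0) - m1x k (S ω) (X ω)) *
                (τ l - (if Y1 ω ≤ q1 l then (1 : ℝ) else 0) - m1x l (S ω) (X ω))) /
              (fd1 (q1 k) * fd1 (q1 l))) ∂μ
          = ∫ ω, π (S ω) * phi1 k (S ω) (Y1 ω) (X ω) * phi1 l (S ω) (Y1 ω) (X ω) ∂μ := by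
        refine integral_congr_ae (Filter.Eventually.of_forall fun ω => ?_)
        simp only [hphi1, hm1x, he1, hB1]
        have h1 := hπ0 (S ω); have h2 := h1π0 (S ω); have h3 := hf1ne k
        have h4 := hf1ne l; have h5 := hf0ne k; have h6 := hf0ne l
        field_simp
        ring
      have hT12 : Integrable (fun ω => e1 k ω * (B1 l ω / fd1 (q1 k))
          + e1 l ω * (B1 k ω / fd1 (q1 l))) μ := hT1int.add hT2int
      have hT123 : Integrable (fun ω => e1 k ω * (B1 l ω / fd1 (q1 k))
          + e1 l ω * (B1 k ω / fd1 (q1 l)) + π (S ω) * B1 k ω * B1 l ω) μ :=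
        hT12.add hPB1int
      rw [integral_add hT123 hI4, integral_add hT12 hPB1int,
        integral_add hT1int hT2int, hT1zero, hT2zero] at h0
      linarith
    -- integrability of the correction terms, arm 0
    have hS1int : Integrable (fun ω => e0 k ω * (B0 l ω / fd0 (q0 k))) μ := by
      refine aux_mul_integrable (hE0L2 k) ?_
      have heq : (fun ω => B0 l ω / fd0 (q0 k)) = fun ω => (fd0 (q0 k))⁻¹ * B0 l ω := by
        funext ω; ring
      rw [heq]; exact (hB0L2 l).const_mul _
    have hS2int : Integrable (fun ω => e0 l ω * (B0 k ω / fd0 (q0 l))) μ := by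
      refine aux_mul_integrable (hE0L2 l) ?_
      have heq : (fun ω => B0 k ω / fd0 (q0 l)) = fun ω => (fd0 (q0 l))⁻¹ * B0 k ω := by
        funext ω; ring
      rw [heq]; exact (hB0L2 k).const_mul _
    have hPB0int : Integrable (fun ω => (1 - π (S ω)) * B0 k ω * B0 l ω) μ :=
      aux_mul_integrable (aux_mulS hSm (fun s => 1 - π s) (hB0L2 k)) (hB0L2 l)
    have hS1zero : ∫ ω, e0 k ω * (B0 l ω / fd0 (q0 k)) ∂μ = 0 := by
      have hh : ∀ s : 𝒮, Measurable (fun x =>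
          (((G0 l s - F0 x s (q0 l)) - π s * (mbar0 l s x - mE0 l s)) /
            ((1 - π s) * fd0 (q0 l)) - (mbar1 l s x - mE1 l s) / fd1 (q1 l)) / fd0 (q0 k)) := by
        intro s
        exact ((((measurable_const.sub (hF0meas s (q0 l))).sub
          (((hmbar0m l s).sub measurable_const).const_mul (π s))).div_const _).sub
          (((hmbar1m l s).sub measurable_const).div_const _)).div_const _
      have hhi : Integrable (fun ω => (fun (s : 𝒮) (x : 𝒳) =>
          (((G0 l s - F0 x s (q0 l)) - π s * (mbar0 l s x - mE0 l s)) /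
            ((1 - π s) * fd0 (q0 l)) - (mbar1 l s x - mE1 l s) / fd1 (q1 l)) / fd0 (q0 k))
          (S ω) (X ω)) μ := by
        have hgi : Integrable (fun ω => (fd0 (q0 k))⁻¹ * B0 l ω) μ :=
          ((hB0L2 l).const_mul _).integrable one_le_two
        refine hgi.congr (Filter.Eventually.of_forall fun ω => ?_)
        simp only [hB0]; ring
      exact aux_orth hY0m hSm hXm F0 hF0meas hF0rng hF0 (q0 k)
        (fun (s : 𝒮) (x : 𝒳) =>
          (((G0 l s - F0 x s (q0 l)) - π s * (mbar0 l s x - mE0 l s)) /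
            ((1 - π s) * fd0 (q0 l)) - (mbar1 l s x - mE1 l s) / fd1 (q1 l)) / fd0 (q0 k)) hh hhi
    have hS2zero : ∫ ω, e0 l ω * (B0 k ω / fd0 (q0 l)) ∂μ = 0 := by
      have hh : ∀ s : 𝒮, Measurable (fun x =>
          (((G0 k s - F0 x s (q0 k)) - π s * (mbar0 k s x - mE0 k s)) /
            ((1 - π s) * fd0 (q0 k)) - (mbar1 k s x - mE1 k s) / fd1 (q1 k)) / fd0 (q0 l)) := by
        intro s
        exact ((((measurable_const.sub (hF0meas s (q0 k))).sub
          (((hmbar0m k s).sub measurable_const).const_mul (π s))).div_const _).sub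
          (((hmbar1m k s).sub measurable_const).div_const _)).div_const _
      have hhi : Integrable (fun ω => (fun (s : 𝒮) (x : 𝒳) =>
          (((G0 k s - F0 x s (q0 k)) - π s * (mbar0 k s x - mE0 k s)) /
            ((1 - π s) * fd0 (q0 k)) - (mbar1 k s x - mE1 k s) / fd1 (q1 k)) / fd0 (q0 l))
          (S ω) (X ω)) μ := by
        have hgi : Integrable (fun ω => (fd0 (q0 l))⁻¹ * B0 k ω) μ :=
          ((hB0L2 k).const_mul _).integrable one_le_two
        refine hgi.congr (Filter.Eventually.of_forall fun ω => ?_)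
        simp only [hB0]; ring
      exact aux_orth hY0m hSm hXm F0 hF0meas hF0rng hF0 (q0 l)
        (fun (s : 𝒮) (x : 𝒳) =>
          (((G0 k s - F0 x s (q0 k)) - π s * (mbar0 k s x - mE0 k s)) /
            ((1 - π s) * fd0 (q0 k)) - (mbar1 k s x - mE1 k s) / fd1 (q1 k)) / fd0 (q0 l)) hh hhi
    have step2 : (∫ ω, (1 - π (S ω)) * phi0 k (S ω) (Y0 ω) (X ω) * phi0 l (S ω) (Y0 ω) (X ω) ∂μ)
        - (∫ ω, (1 - π (S ω))⁻¹ *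
          ((τ k - (if Y0 ω ≤ q0 k then (1 : ℝ) else 0) - m0x k (S ω) (X ω)) *
            (τ l - (if Y0 ω ≤ q0 l then (1 : ℝ) else 0) - m0x l (S ω) (X ω))) /
          (fd0 (q0 k) * fd0 (q0 l)) ∂μ)
        = ∫ ω, (1 - π (S ω)) * B0 k ω * B0 l ω ∂μ := by
      have h0 : ∫ ω, (e0 k ω * (B0 l ω / fd0 (q0 k)) + e0 l ω * (B0 k ω / fd0 (q0 l))
            + (1 - π (S ω)) * B0 k ω * B0 l ω
            + (1 - π (S ω))⁻¹ *
              ((τ k - (if Y0 ω ≤ q0 k then (1 : ℝ) else 0) - m0x k (S ω) (X ω)) *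
                (τ l - (if Y0 ω ≤ q0 l then (1 : ℝ) else 0) - m0x l (S ω) (X ω))) /
              (fd0 (q0 k) * fd0 (q0 l))) ∂μ
          = ∫ ω, (1 - π (S ω)) * phi0 k (S ω) (Y0 ω) (X ω) * phi0 l (S ω) (Y0 ω) (X ω) ∂μ := by
        refine integral_congr_ae (Filter.Eventually.of_forall fun ω => ?_)
        simp only [hphi0, hm0x, he0, hB0]
        have h1 := hπ0 (S ω); have h2 := h1π0 (S ω); have h3 := hf0ne k
        have h4 := hf0ne l; have h5 := hf1ne k; have h6 := hf1ne l
        field_simp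
        ring
      have hS12 : Integrable (fun ω => e0 k ω * (B0 l ω / fd0 (q0 k))
          + e0 l ω * (B0 k ω / fd0 (q0 l))) μ := hS1int.add hS2int
      have hS123 : Integrable (fun ω => e0 k ω * (B0 l ω / fd0 (q0 k))
          + e0 l ω * (B0 k ω / fd0 (q0 l)) + (1 - π (S ω)) * B0 k ω * B0 l ω) μ :=
        hS12.add hPB0int
      rw [integral_add hS123 hI5, integral_add hS12 hPB0int,
        integral_add hS1int hS2int, hS1zero, hS2zero] at h0
      linarith
    -- the stratum part
    have hZ1int : Integrable (fun ω => (G1 k (S ω) - F1 (X ω) (S ω) (q1 k)) *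
        (-(phiS l (S ω) / fd1 (q1 k)))) μ := by
      refine aux_int_bdd_mul (aux_int_bdd
        (show Measurable fun ω => -(phiS l (S ω) / fd1 (q1 k)) from
          (measurable_of_countable (fun s => -(phiS l s / fd1 (q1 k)))).comp hSm)
        (∑ s' : 𝒮, |(fun s => -(phiS l s / fd1 (q1 k))) s'|)
        (fun ω => aux_boundS (fun s => -(phiS l s / fd1 (q1 k))) (S ω)))
        (((measurable_of_countable (G1 k)).comp hSm).sub (hF1cm k))
        (C := (∑ s' : 𝒮, |G1 k s'|) + 1) (fun ω => ?_)
      have b1 := aux_boundS (G1 k) (S ω)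
      have b2 := hF1cb k ω
      have b3 := abs_sub (G1 k (S ω)) (F1 (X ω) (S ω) (q1 k))
      linarith
    have hZ2int : Integrable (fun ω => (G0 k (S ω) - F0 (X ω) (S ω) (q0 k)) *
        (phiS l (S ω) / fd0 (q0 k))) μ := by
      refine aux_int_bdd_mul (aux_int_bdd
        (show Measurable fun ω => phiS l (S ω) / fd0 (q0 k) from
          (measurable_of_countable (fun s => phiS l s / fd0 (q0 k))).comp hSm)
        (∑ s' : 𝒮, |(fun s => phiS l s / fd0 (q0 k)) s'|)
        (fun ω => aux_boundS (fun s => phiS l s / fd0 (q0 k)) (S ω)))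
        (((measurable_of_countable (G0 k)).comp hSm).sub (hF0cm k))
        (C := (∑ s' : 𝒮, |G0 k s'|) + 1) (fun ω => ?_)
      have b1 := aux_boundS (G0 k) (S ω)
      have b2 := hF0cb k ω
      have b3 := abs_sub (G0 k (S ω)) (F0 (X ω) (S ω) (q0 k))
      linarith
    have hZ3int : Integrable (fun ω => (G1 l (S ω) - F1 (X ω) (S ω) (q1 l)) *
        (-(phiS k (S ω) / fd1 (q1 l)))) μ := by
      refine aux_int_bdd_mul (aux_int_bdd
        (show Measurable fun ω => -(phiS k (S ω) / fd1 (q1 l)) from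
          (measurable_of_countable (fun s => -(phiS k s / fd1 (q1 l)))).comp hSm)
        (∑ s' : 𝒮, |(fun s => -(phiS k s / fd1 (q1 l))) s'|)
        (fun ω => aux_boundS (fun s => -(phiS k s / fd1 (q1 l))) (S ω)))
        (((measurable_of_countable (G1 l)).comp hSm).sub (hF1cm l))
        (C := (∑ s' : 𝒮, |G1 l s'|) + 1) (fun ω => ?_)
      have b1 := aux_boundS (G1 l) (S ω)
      have b2 := hF1cb l ω
      have b3 := abs_sub (G1 l (S ω)) (F1 (X ω) (S ω) (q1 l))
      linarith
    have hZ4int : Integrable (fun ω => (G0 l (S ω) - F0 (X ω) (S ω) (q0 l)) *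
        (phiS k (S ω) / fd0 (q0 l))) μ := by
      refine aux_int_bdd_mul (aux_int_bdd
        (show Measurable fun ω => phiS k (S ω) / fd0 (q0 l) from
          (measurable_of_countable (fun s => phiS k s / fd0 (q0 l))).comp hSm)
        (∑ s' : 𝒮, |(fun s => phiS k s / fd0 (q0 l)) s'|)
        (fun ω => aux_boundS (fun s => phiS k s / fd0 (q0 l)) (S ω)))
        (((measurable_of_countable (G0 l)).comp hSm).sub (hF0cm l))
        (C := (∑ s' : 𝒮, |G0 l s'|) + 1) (fun ω => ?_)
      have b1 := aux_boundS (G0 l) (S ω)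
      have b2 := hF0cb l ω
      have b3 := abs_sub (G0 l (S ω)) (F0 (X ω) (S ω) (q0 l))
      linarith
    have hDDint : Integrable (fun ω => D k ω * D l ω) μ :=
      aux_mul_integrable (hDL2 k) (hDL2 l)
    have hDDint' : Integrable (fun ω => -(D k ω * D l ω)) μ := hDDint.neg
    have hZ1zero : ∫ ω, (G1 k (S ω) - F1 (X ω) (S ω) (q1 k)) *
        (-(phiS l (S ω) / fd1 (q1 k))) ∂μ = 0 :=
      aux_dzero hY1m hSm hXm F1 hF1meas hF1rng hF1 hp (q1 k)
        (fun s => -(phiS l s / fd1 (q1 k)))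
    have hZ2zero : ∫ ω, (G0 k (S ω) - F0 (X ω) (S ω) (q0 k)) *
        (phiS l (S ω) / fd0 (q0 k)) ∂μ = 0 :=
      aux_dzero hY0m hSm hXm F0 hF0meas hF0rng hF0 hp (q0 k)
        (fun s => phiS l s / fd0 (q0 k))
    have hZ3zero : ∫ ω, (G1 l (S ω) - F1 (X ω) (S ω) (q1 l)) *
        (-(phiS k (S ω) / fd1 (q1 l))) ∂μ = 0 :=
      aux_dzero hY1m hSm hXm F1 hF1meas hF1rng hF1 hp (q1 l)
        (fun s => -(phiS k s / fd1 (q1 l)))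
    have hZ4zero : ∫ ω, (G0 l (S ω) - F0 (X ω) (S ω) (q0 l)) *
        (phiS k (S ω) / fd0 (q0 l)) ∂μ = 0 :=
      aux_dzero hY0m hSm hXm F0 hF0meas hF0rng hF0 hp (q0 l)
        (fun s => phiS k s / fd0 (q0 l))
    have step3 : (∫ ω, phiS k (S ω) * phiS l (S ω) ∂μ)
        - (∫ ω, (m1x k (S ω) (X ω) / fd1 (q1 k) - m0x k (S ω) (X ω) / fd0 (q0 k)) *
            (m1x l (S ω) (X ω) / fd1 (q1 l) - m0x l (S ω) (X ω) / fd0 (q0 l)) ∂μ)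
        = - ∫ ω, D k ω * D l ω ∂μ := by
      have h0 : ∫ ω, ((G1 k (S ω) - F1 (X ω) (S ω) (q1 k)) * (-(phiS l (S ω) / fd1 (q1 k)))
            + (G0 k (S ω) - F0 (X ω) (S ω) (q0 k)) * (phiS l (S ω) / fd0 (q0 k))
            + (G1 l (S ω) - F1 (X ω) (S ω) (q1 l)) * (-(phiS k (S ω) / fd1 (q1 l)))
            + (G0 l (S ω) - F0 (X ω) (S ω) (q0 l)) * (phiS k (S ω) / fd0 (q0 l))
            + -(D k ω * D l ω)
            + (m1x k (S ω) (X ω) / fd1 (q1 k) - m0x k (S ω) (X ω) / fd0 (q0 k)) *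
              (m1x l (S ω) (X ω) / fd1 (q1 l) - m0x l (S ω) (X ω) / fd0 (q0 l))) ∂μ
          = ∫ ω, phiS k (S ω) * phiS l (S ω) ∂μ := by
        refine integral_congr_ae (Filter.Eventually.of_forall fun ω => ?_)
        simp only [hphiS, hm1x, hm0x, hD]
        have h3 := hf1ne k; have h4 := hf1ne l; have h5 := hf0ne k; have h6 := hf0ne l
        field_simp
        ring
      have hZ12 : Integrable (fun ω =>
          (G1 k (S ω) - F1 (X ω) (S ω) (q1 k)) * (-(phiS l (S ω) / fd1 (q1 k)))
          + (G0 k (S ω) - F0 (X ω) (S ω) (q0 k)) * (phiS l (S ω) / fd0 (q0 k))) μ :=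
        hZ1int.add hZ2int
      have hZ123 : Integrable (fun ω =>
          (G1 k (S ω) - F1 (X ω) (S ω) (q1 k)) * (-(phiS l (S ω) / fd1 (q1 k)))
          + (G0 k (S ω) - F0 (X ω) (S ω) (q0 k)) * (phiS l (S ω) / fd0 (q0 k))
          + (G1 l (S ω) - F1 (X ω) (S ω) (q1 l)) * (-(phiS k (S ω) / fd1 (q1 l)))) μ :=
        hZ12.add hZ3int
      have hZ1234 : Integrable (fun ω =>
          (G1 k (S ω) - F1 (X ω) (S ω) (q1 k)) * (-(phiS l (S ω) / fd1 (q1 k)))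
          + (G0 k (S ω) - F0 (X ω) (S ω) (q0 k)) * (phiS l (S ω) / fd0 (q0 k))
          + (G1 l (S ω) - F1 (X ω) (S ω) (q1 l)) * (-(phiS k (S ω) / fd1 (q1 l)))
          + (G0 l (S ω) - F0 (X ω) (S ω) (q0 l)) * (phiS k (S ω) / fd0 (q0 l))) μ :=
        hZ123.add hZ4int
      have hZ12345 : Integrable (fun ω =>
          (G1 k (S ω) - F1 (X ω) (S ω) (q1 k)) * (-(phiS l (S ω) / fd1 (q1 k)))
          + (G0 k (S ω) - F0 (X ω) (S ω) (q0 k)) * (phiS l (S ω) / fd0 (q0 k))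
          + (G1 l (S ω) - F1 (X ω) (S ω) (q1 l)) * (-(phiS k (S ω) / fd1 (q1 l)))
          + (G0 l (S ω) - F0 (X ω) (S ω) (q0 l)) * (phiS k (S ω) / fd0 (q0 l))
          + -(D k ω * D l ω)) μ := hZ1234.add hDDint'
      rw [integral_add hZ12345 hI6, integral_add hZ1234 hDDint',
        integral_add hZ123 hZ4int, integral_add hZ12 hZ3int,
        integral_add hZ1int hZ2int,
        hZ1zero, hZ2zero, hZ3zero, hZ4zero, integral_neg] at h0
      linarith
    -- assemble
    have hfin : (∫ ω, π (S ω) * B1 k ω * B1 l ω ∂μ)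
        + (∫ ω, (1 - π (S ω)) * B0 k ω * B0 l ω ∂μ)
        - (∫ ω, D k ω * D l ω ∂μ) = ∫ ω, u k ω * u l ω ∂μ := by
      have h0 : ∫ ω, (π (S ω) * B1 k ω * B1 l ω + (1 - π (S ω)) * B0 k ω * B0 l ω
          + -(D k ω * D l ω)) ∂μ = ∫ ω, u k ω * u l ω ∂μ := by
        refine integral_congr_ae (Filter.Eventually.of_forall fun ω => ?_)
        have hp0 := (hπ (S ω)).1
        have hp1 := (hπ (S ω)).2
        have h1p : (0:ℝ) < 1 - π (S ω) := by linarith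
        have hA : Real.sqrt ((1 - π (S ω)) / π (S ω)) * Real.sqrt ((1 - π (S ω)) / π (S ω))
            = (1 - π (S ω)) / π (S ω) := Real.mul_self_sqrt (div_pos h1p hp0).le
        have hB : Real.sqrt (π (S ω) / (1 - π (S ω))) * Real.sqrt (π (S ω) / (1 - π (S ω)))
            = π (S ω) / (1 - π (S ω)) := Real.mul_self_sqrt (div_pos hp0 h1p).le
        have hAB : Real.sqrt ((1 - π (S ω)) / π (S ω)) * Real.sqrt (π (S ω) / (1 - π (S ω)))
            = 1 := by
          rw [← Real.sqrt_mul (div_pos h1p hp0).le]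
          rw [show (1 - π (S ω)) / π (S ω) * (π (S ω) / (1 - π (S ω))) = 1 by
            field_simp]
          exact Real.sqrt_one
        have expand : u k ω * u l ω =
            (Real.sqrt ((1 - π (S ω)) / π (S ω)) * Real.sqrt ((1 - π (S ω)) / π (S ω))) *
              ((((m1x k (S ω) (X ω) - (τ k - G1 k (S ω))) -
                (mbar1 k (S ω) (X ω) - mE1 k (S ω))) / fd1 (q1 k)) *
               (((m1x l (S ω) (X ω) - (τ l - G1 l (S ω))) -
                (mbar1 l (S ω) (X ω) - mE1 l (S ω))) / fd1 (q1 l)))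
            + (Real.sqrt ((1 - π (S ω)) / π (S ω)) * Real.sqrt (π (S ω) / (1 - π (S ω)))) *
              ((((m1x k (S ω) (X ω) - (τ k - G1 k (S ω))) -
                (mbar1 k (S ω) (X ω) - mE1 k (S ω))) / fd1 (q1 k)) *
               (((m0x l (S ω) (X ω) - (τ l - G0 l (S ω))) -
                (mbar0 l (S ω) (X ω) - mE0 l (S ω))) / fd0 (q0 l))
              + (((m1x l (S ω) (X ω) - (τ l - G1 l (S ω))) -
                (mbar1 l (S ω) (X ω) - mE1 l (S ω))) / fd1 (q1 l)) *
               (((m0x k (S ω) (X ω) - (τ k - G0 k (S ω))) -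
                (mbar0 k (S ω) (X ω) - mE0 k (S ω))) / fd0 (q0 k)))
            + (Real.sqrt (π (S ω) / (1 - π (S ω))) * Real.sqrt (π (S ω) / (1 - π (S ω)))) *
              ((((m0x k (S ω) (X ω) - (τ k - G0 k (S ω))) -
                (mbar0 k (S ω) (X ω) - mE0 k (S ω))) / fd0 (q0 k)) *
               (((m0x l (S ω) (X ω) - (τ l - G0 l (S ω))) -
                (mbar0 l (S ω) (X ω) - mE0 l (S ω))) / fd0 (q0 l))) := by
          simp only [hudef]; ring
        rw [hA, hB, hAB] at expand
        refine Eq.trans ?_ expand.symm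
        simp only [hB1, hB0, hD, hm1x, hm0x]
        have h1 := hπ0 (S ω); have h2 := h1π0 (S ω); have h3 := hf1ne k
        have h4 := hf1ne l; have h5 := hf0ne k; have h6 := hf0ne l
        field_simp
        ring
      have hPBB : Integrable (fun ω => π (S ω) * B1 k ω * B1 l ω
          + (1 - π (S ω)) * B0 k ω * B0 l ω) μ := hPB1int.add hPB0int
      rw [integral_add hPBB hDDint', integral_add hPB1int hPB0int, integral_neg] at h0
      linarith
    have hSs : Sig k l = (∫ ω, π (S ω) * phi1 k (S ω) (Y1 ω) (X ω) *
          phi1 l (S ω) (Y1 ω) (X ω) ∂μ)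
        + (∫ ω, (1 - π (S ω)) * phi0 k (S ω) (Y0 ω) (X ω) * phi0 l (S ω) (Y0 ω) (X ω) ∂μ)
        + (∫ ω, phiS k (S ω) * phiS l (S ω) ∂μ) := rfl
    have hTs : SigStar k l = (∫ ω, (π (S ω))⁻¹ *
          ((τ k - (if Y1 ω ≤ q1 k then (1 : ℝ) else 0) - m1x k (S ω) (X ω)) *
            (τ l - (if Y1 ω ≤ q1 l then (1 : ℝ) else 0) - m1x l (S ω) (X ω))) /
          (fd1 (q1 k) * fd1 (q1 l)) ∂μ)
        + (∫ ω, (1 - π (S ω))⁻¹ *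
          ((τ k - (if Y0 ω ≤ q0 k then (1 : ℝ) else 0) - m0x k (S ω) (X ω)) *
            (τ l - (if Y0 ω ≤ q0 l then (1 : ℝ) else 0) - m0x l (S ω) (X ω))) /
          (fd0 (q0 k) * fd0 (q0 l)) ∂μ)
        + (∫ ω, (m1x k (S ω) (X ω) / fd1 (q1 k) - m0x k (S ω) (X ω) / fd0 (q0 k)) *
            (m1x l (S ω) (X ω) / fd1 (q1 l) - m0x l (S ω) (X ω) / fd0 (q0 l)) ∂μ) := rfl
    rw [hSs, hTs]
    linarith [step1, step2, step3, hfin]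
  -- ===== conclusions =====
  have huuint : ∀ k l : Fin K, Integrable (fun ω => u k ω * u l ω) μ :=
    fun k l => aux_mul_integrable (hUL2 k) (hUL2 l)
  have hsym : ∀ k l : Fin K, (∫ ω, u k ω * u l ω ∂μ) = ∫ ω, u l ω * u k ω ∂μ :=
    fun k l => integral_congr_ae (Filter.Eventually.of_forall fun ω => mul_comm _ _)
  refine ⟨key, Matrix.posSemidef_iff_dotProduct_mulVec.mpr ⟨?_, ?_⟩, ?_⟩
  · show (Matrix.of fun k l : Fin K => Sig k l - SigStar k l)ᴴ
        = Matrix.of fun k l : Fin K => Sig k l - SigStar k l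
    ext k l
    simp only [Matrix.conjTranspose_apply, Matrix.of_apply, star_trivial]
    rw [key l k, key k l, hsym l k]
  · intro x
    have hcalc : (x ⬝ᵥ (Matrix.of fun k l : Fin K => Sig k l - SigStar k l).mulVec x)
        = ∫ ω, (∑ k, x k * u k ω)^2 ∂μ := by
      have h1 : (x ⬝ᵥ (Matrix.of fun k l : Fin K => Sig k l - SigStar k l).mulVec x)
          = ∑ k, ∑ l, (x k * x l) * ∫ ω, u k ω * u l ω ∂μ := by
        simp only [dotProduct, Matrix.mulVec, Matrix.of_apply, Finset.mul_sum, key]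
        exact Finset.sum_congr rfl fun k _ => Finset.sum_congr rfl fun l _ => by ring
      have h2 : ∫ ω, (∑ k, x k * u k ω)^2 ∂μ
          = ∑ k, ∑ l, (x k * x l) * ∫ ω, u k ω * u l ω ∂μ := by
        have hpt : ∀ ω, (∑ k, x k * u k ω)^2
            = ∑ k, ∑ l, (x k * x l) * (u k ω * u l ω) := by
          intro ω
          rw [sq, Finset.sum_mul_sum]
          exact Finset.sum_congr rfl fun k _ => Finset.sum_congr rfl fun l _ => by ring
        calc ∫ ω, (∑ k, x k * u k ω)^2 ∂μ
            = ∫ ω, ∑ k, ∑ l, (x k * x l) * (u k ω * u l ω) ∂μ :=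
              integral_congr_ae (Filter.Eventually.of_forall hpt)
          _ = ∑ k, ∫ ω, ∑ l, (x k * x l) * (u k ω * u l ω) ∂μ :=
              integral_finset_sum _ (fun k _ =>
                integrable_finset_sum _ (fun l _ => (huuint k l).const_mul _))
          _ = ∑ k, ∑ l, ∫ ω, (x k * x l) * (u k ω * u l ω) ∂μ :=
              Finset.sum_congr rfl fun k _ =>
                integral_finset_sum _ (fun l _ => (huuint k l).const_mul _)
          _ = ∑ k, ∑ l, (x k * x l) * ∫ ω, u k ω * u l ω ∂μ :=
              Finset.sum_congr rfl fun k _ => Finset.sum_congr rfl fun l _ =>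
                integral_const_mul _ _
      rw [h1, ← h2]
    have hquad : 0 ≤ x ⬝ᵥ (Matrix.of fun k l : Fin K => Sig k l - SigStar k l).mulVec x := by
      rw [hcalc]
      exact integral_nonneg fun ω => sq_nonneg _
    simpa using hquad
  · intro hcs
    have hms : ∀ s : 𝒮, MeasurableSet {ω | S ω = s} := fun s =>
      hSm (measurableSet_singleton s)
    have hprobne : ∀ s, probS μ S s ≠ 0 := fun s => (aux_probS_pos (hp s)).ne'
    have hG1mul : ∀ (j : Fin K) (s : 𝒮), G1 j s * probS μ S s
        = (μ ({ω | Y1 ω ≤ q1 j} ∩ {ω | S ω = s})).toReal := by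
      intro j s
      have h1 : ∫ ω in {ω | S ω = s}, (if Y1 ω ≤ q1 j then (1:ℝ) else 0) ∂μ
          = (μ.restrict {ω | S ω = s} {ω | Y1 ω ≤ q1 j}).toReal :=
        aux_setIntegral_ite hY1m _ _
      have h2 : μ.restrict {ω | S ω = s} {ω | Y1 ω ≤ q1 j}
          = μ ({ω | Y1 ω ≤ q1 j} ∩ {ω | S ω = s}) :=
        Measure.restrict_apply (measurableSet_le hY1m measurable_const)
      show condMeanS μ S (fun ω => if Y1 ω ≤ q1 j then (1:ℝ) else 0) s * probS μ S s = _
      unfold condMeanS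
      rw [div_mul_cancel₀ _ (hprobne s), h1, h2]
    have hG0mul : ∀ (j : Fin K) (s : 𝒮), G0 j s * probS μ S s
        = (μ ({ω | Y0 ω ≤ q0 j} ∩ {ω | S ω = s})).toReal := by
      intro j s
      have h1 : ∫ ω in {ω | S ω = s}, (if Y0 ω ≤ q0 j then (1:ℝ) else 0) ∂μ
          = (μ.restrict {ω | S ω = s} {ω | Y0 ω ≤ q0 j}).toReal :=
        aux_setIntegral_ite hY0m _ _
      have h2 : μ.restrict {ω | S ω = s} {ω | Y0 ω ≤ q0 j}
          = μ ({ω | Y0 ω ≤ q0 j} ∩ {ω | S ω = s}) :=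
        Measure.restrict_apply (measurableSet_le hY0m measurable_const)
      show condMeanS μ S (fun ω => if Y0 ω ≤ q0 j then (1:ℝ) else 0) s * probS μ S s = _
      unfold condMeanS
      rw [div_mul_cancel₀ _ (hprobne s), h1, h2]
    have hF1int : ∀ (j : Fin K) (s : 𝒮), ∫ ω in {ω | S ω = s}, F1 (X ω) s (q1 j) ∂μ
        = (μ ({ω | Y1 ω ≤ q1 j} ∩ {ω | S ω = s})).toReal := by
      intro j s
      have := hF1 s (q1 j) Set.univ MeasurableSet.univ
      simpa [Set.preimage_univ, Set.inter_univ] using this.symm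
    have hF0int : ∀ (j : Fin K) (s : 𝒮), ∫ ω in {ω | S ω = s}, F0 (X ω) s (q0 j) ∂μ
        = (μ ({ω | Y0 ω ≤ q0 j} ∩ {ω | S ω = s})).toReal := by
      intro j s
      have := hF0 s (q0 j) Set.univ MeasurableSet.univ
      simpa [Set.preimage_univ, Set.inter_univ] using this.symm
    have hmE1eq : ∀ (j : Fin K) (s : 𝒮), mE1 j s = τ j - G1 j s := by
      intro j s
      have hae := (hcs j).1
      have hseteq : ∫ ω in {ω | S ω = s}, mbar1 j s (X ω) ∂μ
          = ∫ ω in {ω | S ω = s}, (τ j - F1 (X ω) s (q1 j)) ∂μ := by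
        refine setIntegral_congr_ae (hms s) ?_
        filter_upwards [hae] with ω hω hmem
        rw [show S ω = s from hmem] at hω
        exact hω
      have hconst : Integrable (fun ω => F1 (X ω) s (q1 j)) (μ.restrict {ω | S ω = s}) := by
        refine (aux_int_bdd (f := fun ω => F1 (X ω) s (q1 j))
          ((hF1meas s (q1 j)).comp hXm) 1 (fun ω => ?_)).restrict
        obtain ⟨h0, h1⟩ := hF1rng (X ω) s (q1 j)
        rw [abs_le]; exact ⟨by linarith, h1⟩
      have hsub : ∫ ω in {ω | S ω = s}, (τ j - F1 (X ω) s (q1 j)) ∂μ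
          = probS μ S s * τ j - (μ ({ω | Y1 ω ≤ q1 j} ∩ {ω | S ω = s})).toReal := by
        rw [integral_sub (integrable_const _) hconst, setIntegral_const, smul_eq_mul,
          hF1int j s]
        rfl
      show condMeanS μ S (fun ω => mbar1 j s (X ω)) s = τ j - G1 j s
      unfold condMeanS
      rw [hseteq, hsub, div_eq_iff (hprobne s), sub_mul, hG1mul j s]
      ring
    have hmE0eq : ∀ (j : Fin K) (s : 𝒮), mE0 j s = τ j - G0 j s := by
      intro j s
      have hae := (hcs j).2
      have hseteq : ∫ ω in {ω | S ω = s}, mbar0 j s (X ω) ∂μ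
          = ∫ ω in {ω | S ω = s}, (τ j - F0 (X ω) s (q0 j)) ∂μ := by
        refine setIntegral_congr_ae (hms s) ?_
        filter_upwards [hae] with ω hω hmem
        rw [show S ω = s from hmem] at hω
        exact hω
      have hconst : Integrable (fun ω => F0 (X ω) s (q0 j)) (μ.restrict {ω | S ω = s}) := by
        refine (aux_int_bdd (f := fun ω => F0 (X ω) s (q0 j))
          ((hF0meas s (q0 j)).comp hXm) 1 (fun ω => ?_)).restrict
        obtain ⟨h0, h1⟩ := hF0rng (X ω) s (q0 j)
        rw [abs_le]; exact ⟨by linarith, h1⟩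
      have hsub : ∫ ω in {ω | S ω = s}, (τ j - F0 (X ω) s (q0 j)) ∂μ
          = probS μ S s * τ j - (μ ({ω | Y0 ω ≤ q0 j} ∩ {ω | S ω = s})).toReal := by
        rw [integral_sub (integrable_const _) hconst, setIntegral_const, smul_eq_mul,
          hF0int j s]
        rfl
      show condMeanS μ S (fun ω => mbar0 j s (X ω)) s = τ j - G0 j s
      unfold condMeanS
      rw [hseteq, hsub, div_eq_iff (hprobne s), sub_mul, hG0mul j s]
      ring
    have hu0 : ∀ j : Fin K, ∀ᵐ ω ∂μ, u j ω = 0 := by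
      intro j
      filter_upwards [(hcs j).1, (hcs j).2] with ω h1 h0
      show Real.sqrt ((1 - π (S ω)) / π (S ω)) *
          (((m1x j (S ω) (X ω) - (τ j - G1 j (S ω))) -
            (mbar1 j (S ω) (X ω) - mE1 j (S ω))) / fd1 (q1 j)) +
        Real.sqrt (π (S ω) / (1 - π (S ω))) *
          (((m0x j (S ω) (X ω) - (τ j - G0 j (S ω))) -
            (mbar0 j (S ω) (X ω) - mE0 j (S ω))) / fd0 (q0 j)) = 0
      rw [h1, h0, hmE1eq j (S ω), hmE0eq j (S ω)]
      ring
    ext k l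
    simp only [Matrix.of_apply, Matrix.zero_apply]
    rw [key k l]
    have hz : ∀ᵐ ω ∂μ, u k ω * u l ω = 0 := by
      filter_upwards [hu0 k] with ω h
      rw [h, zero_mul]
    rw [integral_congr_ae hz, integral_zero]
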